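/- One-bit isometry: there exist absolute constants α > 0, δ₀ ∈ (0,1), c₀ ∈ ℕ and, for each s, fixed subsets {S_u}_{u∈U} of [2^s] with |U| = 2^{s+c₀}, such that for every p, q ∈ [0,1]^{2^s}: P(|p(S_U) − q(S_U)| ≥ α·‖p − q‖₂) ≥ 1 − δ₀, where U is uniform on U and p(S) = ∑_{i∈S} p_i. -/

import Mathlib

open Finset

open Finset Real
namespace OneBit

-- (for testing, we re-elaborate with m1 contents prepended later)



noncomputable def sgn (b : Bool) : ℝ := if b then 1 else -1

@[simp] lemma sgn_true : sgn true = 1 := rfl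
@[simp] lemma sgn_false : sgn false = -1 := rfl

variable {ι : Type*} [Fintype ι] [DecidableEq ι]

lemma cube_flip (a : ι) (f : (ι → Bool) → ℝ) :
    2 * ∑ ω : ι → Bool, f ω
      = ∑ ω : ι → Bool, (f (Function.update ω a true) + f (Function.update ω a false)) := by
  have hinv : Function.Involutive (fun ω : ι → Bool => Function.update ω a (!(ω a))) := by
    intro ω
    funext i
    by_cases h : i = a
    · subst h; simp
    · simp [Function.update_of_ne h]
  have hsum : ∑ ω : ι → Bool, f (Function.update ω a (!(ω a))) = ∑ ω : ι → Bool, f ω :=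
    Equiv.sum_comp hinv.toPerm f
  have hpt : ∀ ω : ι → Bool, f ω + f (Function.update ω a (!(ω a)))
      = f (Function.update ω a true) + f (Function.update ω a false) := by
    intro ω
    cases h : ω a
    · simp only [Bool.not_false]
      rw [show Function.update ω a false = ω from by rw [← h]; exact Function.update_eq_self a ω]
      ring
    · simp only [Bool.not_true]
      rw [show Function.update ω a true = ω from by rw [← h]; exact Function.update_eq_self a ω]
  calc 2 * ∑ ω : ι → Bool, f ω
      = (∑ ω : ι → Bool, f ω) + ∑ ω : ι → Bool, f (Function.update ω a (!(ω a))) := by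
        rw [hsum]; ring
    _ = ∑ ω : ι → Bool, (f ω + f (Function.update ω a (!(ω a)))) := by rw [← Finset.sum_add_distrib]
    _ = ∑ ω : ι → Bool, (f (Function.update ω a true) + f (Function.update ω a false)) := by
        exact Finset.sum_congr rfl fun ω _ => hpt ω

noncomputable def Wsum (s : Finset ι) (c : ι → ℝ) (ω : ι → Bool) : ℝ :=
  ∑ i ∈ s, c i * sgn (ω i)

lemma Wsum_update {s : Finset ι} {a : ι} (ha : a ∉ s) (c : ι → ℝ) (ω : ι → Bool) (b : Bool) :
    Wsum s c (Function.update ω a b) = Wsum s c ω := by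
  unfold Wsum
  refine Finset.sum_congr rfl fun i hi => ?_
  rw [Function.update_of_ne (by rintro rfl; exact ha hi)]

lemma Wsum_insert {s : Finset ι} {a : ι} (ha : a ∉ s) (c : ι → ℝ) (ω : ι → Bool) :
    Wsum (insert a s) c ω = c a * sgn (ω a) + Wsum s c ω := by
  unfold Wsum; exact Finset.sum_insert ha

lemma sum_W2 (s : Finset ι) (c : ι → ℝ) :
    ∑ ω : ι → Bool, (Wsum s c ω) ^ 2
      = 2 ^ Fintype.card ι * ∑ i ∈ s, (c i) ^ 2 := by
  classical
  induction s using Finset.induction_on with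
  | empty => simp [Wsum]
  | @insert a s ha ih =>
    have key := cube_flip a (fun ω => (Wsum (insert a s) c ω) ^ 2)
    have hpt : ∀ ω : ι → Bool,
        (Wsum (insert a s) c (Function.update ω a true)) ^ 2
          + (Wsum (insert a s) c (Function.update ω a false)) ^ 2
        = 2 * (Wsum s c ω) ^ 2 + 2 * (c a) ^ 2 := by
      intro ω
      rw [Wsum_insert ha, Wsum_insert ha, Function.update_self, Function.update_self,
        Wsum_update ha, Wsum_update ha]
      simp only [sgn_true, sgn_false]
      ring
    have : 2 * ∑ ω : ι → Bool, (Wsum (insert a s) c ω) ^ 2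
        = 2 * (2 ^ Fintype.card ι * ∑ i ∈ s, (c i) ^ 2) + 2 * (2 ^ Fintype.card ι * (c a) ^ 2) := by
      rw [key]
      rw [Finset.sum_congr rfl fun ω _ => hpt ω]
      rw [Finset.sum_add_distrib, ← Finset.mul_sum, ih, Finset.sum_const]
      have hcard : (Finset.univ : Finset (ι → Bool)).card = 2 ^ Fintype.card ι := by
        simp [Fintype.card_fun]
      rw [hcard]
      push_cast
      ring
    rw [Finset.sum_insert ha]
    nlinarith [this]

lemma sum_sq_nonneg (s : Finset ι) (c : ι → ℝ) : (0:ℝ) ≤ ∑ i ∈ s, (c i) ^ 2 :=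
  Finset.sum_nonneg fun i _ => sq_nonneg _

lemma sum_W4 (s : Finset ι) (c : ι → ℝ) :
    ∑ ω : ι → Bool, (Wsum s c ω) ^ 4
      ≤ 3 * 2 ^ Fintype.card ι * (∑ i ∈ s, (c i) ^ 2) ^ 2 := by
  classical
  induction s using Finset.induction_on with
  | empty => simp [Wsum]
  | @insert a s ha ih =>
    have key := cube_flip a (fun ω => (Wsum (insert a s) c ω) ^ 4)
    have hpt : ∀ ω : ι → Bool,
        (Wsum (insert a s) c (Function.update ω a true)) ^ 4
          + (Wsum (insert a s) c (Function.update ω a false)) ^ 4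
        = 2 * (Wsum s c ω) ^ 4 + 12 * (c a) ^ 2 * (Wsum s c ω) ^ 2 + 2 * (c a) ^ 4 := by
      intro ω
      rw [Wsum_insert ha, Wsum_insert ha, Function.update_self, Function.update_self,
        Wsum_update ha, Wsum_update ha]
      simp only [sgn_true, sgn_false]
      ring
    have h2 := sum_W2 (ι := ι) s c
    have hS : (0:ℝ) ≤ ∑ i ∈ s, (c i) ^ 2 := sum_sq_nonneg s c
    have hN : (0:ℝ) < 2 ^ Fintype.card ι := by positivity
    have hkey : 2 * ∑ ω : ι → Bool, (Wsum (insert a s) c ω) ^ 4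
        = 2 * ∑ ω : ι → Bool, (Wsum s c ω) ^ 4
          + 12 * (c a) ^ 2 * (2 ^ Fintype.card ι * ∑ i ∈ s, (c i) ^ 2)
          + 2 * (2 ^ Fintype.card ι * (c a) ^ 4) := by
      rw [key, Finset.sum_congr rfl fun ω _ => hpt ω]
      rw [Finset.sum_add_distrib, Finset.sum_add_distrib, ← Finset.mul_sum, ← Finset.mul_sum,
        Finset.sum_const]
      have hcard : (Finset.univ : Finset (ι → Bool)).card = 2 ^ Fintype.card ι := by
        simp [Fintype.card_fun]
      rw [hcard, ← h2]
      push_cast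
      ring
    rw [Finset.sum_insert ha]
    nlinarith [hkey, ih, sq_nonneg (c a), sq_nonneg ((c a)^2), mul_pos hN hN]

lemma sum_mgf (s : Finset ι) (c : ι → ℝ) :
    ∑ ω : ι → Bool, Real.exp (Wsum s c ω)
      ≤ 2 ^ Fintype.card ι * Real.exp ((∑ i ∈ s, (c i) ^ 2) / 2) := by
  classical
  induction s using Finset.induction_on with
  | empty =>
    simp [Wsum, Finset.card_univ, Fintype.card_fun]
  | @insert a s ha ih =>
    have key := cube_flip a (fun ω => Real.exp (Wsum (insert a s) c ω))
    have hpt : ∀ ω : ι → Bool,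
        Real.exp (Wsum (insert a s) c (Function.update ω a true))
          + Real.exp (Wsum (insert a s) c (Function.update ω a false))
        ≤ Real.exp (Wsum s c ω) * (2 * Real.exp ((c a) ^ 2 / 2)) := by
      intro ω
      rw [Wsum_insert ha, Wsum_insert ha, Function.update_self, Function.update_self,
        Wsum_update ha, Wsum_update ha]
      simp only [sgn_true, sgn_false]
      have hcosh := Real.cosh_le_exp_half_sq (c a)
      rw [Real.cosh_eq] at hcosh
      have h1 : Real.exp (c a * 1 + Wsum s c ω) = Real.exp (Wsum s c ω) * Real.exp (c a) := by
        rw [← Real.exp_add]; ring_nf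
      have h2 : Real.exp (c a * -1 + Wsum s c ω) = Real.exp (Wsum s c ω) * Real.exp (-(c a)) := by
        rw [← Real.exp_add]; ring_nf
      rw [h1, h2, ← mul_add]
      have := Real.exp_pos (Wsum s c ω)
      nlinarith [this, hcosh]
    have hsum : 2 * ∑ ω : ι → Bool, Real.exp (Wsum (insert a s) c ω)
        ≤ (2 * Real.exp ((c a) ^ 2 / 2)) * ∑ ω : ι → Bool, Real.exp (Wsum s c ω) := by
      rw [key]
      calc ∑ ω : ι → Bool, (Real.exp (Wsum (insert a s) c (Function.update ω a true))
            + Real.exp (Wsum (insert a s) c (Function.update ω a false)))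
          ≤ ∑ ω : ι → Bool, Real.exp (Wsum s c ω) * (2 * Real.exp ((c a) ^ 2 / 2)) :=
            Finset.sum_le_sum fun ω _ => hpt ω
        _ = (2 * Real.exp ((c a) ^ 2 / 2)) * ∑ ω : ι → Bool, Real.exp (Wsum s c ω) := by
            rw [← Finset.sum_mul]; ring
    have hexp : (0:ℝ) < Real.exp ((c a) ^ 2 / 2) := Real.exp_pos _
    have hrhs : (2 * Real.exp ((c a) ^ 2 / 2)) * ∑ ω : ι → Bool, Real.exp (Wsum s c ω)
        ≤ (2 * Real.exp ((c a) ^ 2 / 2)) * (2 ^ Fintype.card ι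
            * Real.exp ((∑ i ∈ s, (c i) ^ 2) / 2)) := by
      apply mul_le_mul_of_nonneg_left ih
      positivity
    rw [Finset.sum_insert ha]
    have hfin : (2 * Real.exp ((c a) ^ 2 / 2)) * (2 ^ Fintype.card ι
            * Real.exp ((∑ i ∈ s, (c i) ^ 2) / 2))
        = 2 * (2 ^ Fintype.card ι * Real.exp (((c a) ^ 2 + ∑ i ∈ s, (c i) ^ 2) / 2)) := by
      have hh : Real.exp (((c a) ^ 2 + ∑ i ∈ s, (c i) ^ 2) / 2)
          = Real.exp ((c a) ^ 2 / 2) * Real.exp ((∑ i ∈ s, (c i) ^ 2) / 2) := by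
        rw [← Real.exp_add]; ring_nf
      rw [hh]; ring
    linarith [hsum.trans (hrhs.trans_eq hfin)]

set_option maxHeartbeats 1000000

section Counting

lemma exp_neg_le_quad {u : ℝ} (hu : 0 ≤ u) : Real.exp (-u) ≤ 1 - u + u ^ 2 := by
  have h1 : (0:ℝ) < 1 + u := by linarith
  have h2 : 1 + u ≤ Real.exp u := by linarith [Real.add_one_le_exp u]
  have h3 : Real.exp (-u) = (Real.exp u)⁻¹ := Real.exp_neg u
  have h4 : (Real.exp u)⁻¹ ≤ (1 + u)⁻¹ := by
    apply inv_anti₀ h1 h2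
  have h5 : (1 + u)⁻¹ ≤ 1 - u + u ^ 2 := by
    rw [inv_le_iff_one_le_mul₀ h1]
    nlinarith
  linarith

lemma card_filter_le_sum_exp {Ω' : Type*} [Fintype Ω'] (p : Ω' → Prop) [DecidablePred p]
    (f : Ω' → ℝ) (hf : ∀ ω, 0 ≤ f ω) (h1 : ∀ ω, p ω → 1 ≤ f ω) :
    (((Finset.univ.filter p)).card : ℝ) ≤ ∑ ω : Ω', f ω := by
  calc ((Finset.univ.filter p).card : ℝ)
      = ∑ ω ∈ Finset.univ.filter p, (1:ℝ) := by rw [Finset.sum_const]; simp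
    _ ≤ ∑ ω ∈ Finset.univ.filter p, f ω := Finset.sum_le_sum fun ω hω => h1 ω (Finset.mem_filter.mp hω).2
    _ ≤ ∑ ω : Ω', f ω := Finset.sum_le_sum_of_subset_of_nonneg (Finset.filter_subset _ _)
        (fun ω _ _ => hf ω)

variable {n M : ℕ}

/-- The `±1` entry associated to row `r` and column `j`, summed against `y`. -/
noncomputable def X (y : Fin n → ℝ) (r : Fin n → Bool) : ℝ := ∑ j, y j * sgn (r j)

lemma X_eq_Wsum (y : Fin n → ℝ) (r : Fin n → Bool) : X y r = Wsum Finset.univ y r := rfl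

lemma sum_X2 (y : Fin n → ℝ) :
    ∑ r : Fin n → Bool, (X y r) ^ 2 = 2 ^ n * ∑ j, (y j) ^ 2 := by
  simpa [X_eq_Wsum, Fintype.card_fin] using sum_W2 (Finset.univ : Finset (Fin n)) y

lemma sum_X4 (y : Fin n → ℝ) :
    ∑ r : Fin n → Bool, (X y r) ^ 4 ≤ 3 * 2 ^ n * (∑ j, (y j) ^ 2) ^ 2 := by
  simpa [X_eq_Wsum, Fintype.card_fin] using sum_W4 (Finset.univ : Finset (Fin n)) y

/-- Per-row exponential moment bound for the truncated small-ball argument. -/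
lemma row_exp_bound (y : Fin n → ℝ) (hy : 99/100 ≤ ∑ j, (y j) ^ 2)
    (hy1 : ∑ j, (y j) ^ 2 ≤ 1) :
    ∑ r : Fin n → Bool, Real.exp (-((X y r) ^ 2 / 8)) ≤ 2 ^ n * (15/16) := by
  have hstep : ∀ r : Fin n → Bool, Real.exp (-((X y r) ^ 2 / 8))
      ≤ 1 - (X y r) ^ 2 / 8 + ((X y r) ^ 2) ^ 2 / 64 := by
    intro r
    have := exp_neg_le_quad (u := (X y r) ^ 2 / 8) (by positivity)
    calc Real.exp (-((X y r) ^ 2 / 8)) ≤ 1 - (X y r) ^ 2 / 8 + ((X y r) ^ 2 / 8) ^ 2 := this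
      _ = 1 - (X y r) ^ 2 / 8 + ((X y r) ^ 2) ^ 2 / 64 := by ring
  have h2 := sum_X2 y
  have h4 := sum_X4 y
  have hN : (0:ℝ) < 2 ^ n := by positivity
  calc ∑ r : Fin n → Bool, Real.exp (-((X y r) ^ 2 / 8))
      ≤ ∑ r : Fin n → Bool, (1 - (X y r) ^ 2 / 8 + ((X y r) ^ 2) ^ 2 / 64) :=
        Finset.sum_le_sum fun r _ => hstep r
    _ = 2 ^ n - (∑ r : Fin n → Bool, (X y r) ^ 2) / 8
          + (∑ r : Fin n → Bool, ((X y r) ^ 2) ^ 2) / 64 := by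
        rw [Finset.sum_add_distrib, Finset.sum_sub_distrib, Finset.sum_const]
        rw [← Finset.sum_div, ← Finset.sum_div]
        simp [Fintype.card_fun]
    _ ≤ 2 ^ n * (15/16) := by
        have h4' : ∑ r : Fin n → Bool, ((X y r) ^ 2) ^ 2 ≤ 3 * 2 ^ n * (∑ j, (y j) ^ 2) ^ 2 := by
          calc ∑ r : Fin n → Bool, ((X y r) ^ 2) ^ 2 = ∑ r : Fin n → Bool, (X y r) ^ 4 := by
                apply Finset.sum_congr rfl; intro r _; ring
            _ ≤ 3 * 2 ^ n * (∑ j, (y j) ^ 2) ^ 2 := h4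
        rw [h2]
        have hq : 3 * (∑ j, (y j) ^ 2) ^ 2 ≤ 8 * (∑ j, (y j) ^ 2) - 4 := by nlinarith
        have hq2 : (3 : ℝ) * 2 ^ n * (∑ j, (y j) ^ 2) ^ 2 ≤ 2 ^ n * (8 * (∑ j, (y j) ^ 2) - 4) := by
          calc (3 : ℝ) * 2 ^ n * (∑ j, (y j) ^ 2) ^ 2 = 2 ^ n * (3 * (∑ j, (y j) ^ 2) ^ 2) := by ring
            _ ≤ 2 ^ n * (8 * (∑ j, (y j) ^ 2) - 4) := by
              exact mul_le_mul_of_nonneg_left hq hN.le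
        linarith

/-- Factorization of a product over a subset of independent rows. -/
lemma prod_rows (I : Finset (Fin M)) (g : (Fin n → Bool) → ℝ) :
    ∑ ω : Fin M → Fin n → Bool, ∏ i ∈ I, g (ω i)
      = (∑ r : Fin n → Bool, g r) ^ I.card * ((2:ℝ) ^ n) ^ (M - I.card) := by
  classical
  have key : ∀ ω : Fin M → Fin n → Bool,
      (∏ i ∈ I, g (ω i)) = ∏ i : Fin M, (if i ∈ I then g (ω i) else 1) := by
    intro ω
    rw [Finset.prod_ite_mem Finset.univ I (fun i => g (ω i)), Finset.univ_inter]
  rw [Finset.sum_congr rfl fun ω _ => key ω]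
  have hpu := Finset.prod_univ_sum (fun _ : Fin M => (Finset.univ : Finset (Fin n → Bool)))
      (fun i r => if i ∈ I then g r else 1)
  rw [Fintype.piFinset_univ] at hpu
  rw [← hpu]
  have hfac : ∀ i : Fin M, (∑ r : Fin n → Bool, if i ∈ I then g r else 1)
      = if i ∈ I then (∑ r : Fin n → Bool, g r) else (2:ℝ) ^ n := by
    intro i
    by_cases h : i ∈ I <;> simp [h, Fintype.card_fun]
  rw [Finset.prod_congr rfl fun i _ => hfac i]
  rw [Finset.prod_ite, Finset.prod_const, Finset.prod_const]
  have h1 : Finset.univ.filter (fun i => i ∈ I) = I := by simp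
  have h2' : (Finset.univ.filter (fun i => ¬ i ∈ I)).card = M - I.card := by
    rw [Finset.filter_not]
    simp only [Finset.filter_univ_mem]
    rw [Finset.card_sdiff_of_subset (Finset.subset_univ I), Finset.card_univ, Fintype.card_fin]
  rw [h1, h2']

lemma count_min (I : Finset (Fin M)) (y : Fin n → ℝ) (hy : 99/100 ≤ ∑ j, (y j) ^ 2)
    (hy1 : ∑ j, (y j) ^ 2 ≤ 1) :
    ((Finset.univ.filter (fun ω : Fin M → Fin n → Bool =>
        ∑ i ∈ I, (X y (ω i)) ^ 2 ≤ (I.card : ℝ)/64)).card : ℝ)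
      ≤ (2:ℝ) ^ (n*M) * Real.exp (-(I.card : ℝ)/20) := by
  classical
  set t := I.card with ht
  set g : (Fin n → Bool) → ℝ := fun r => Real.exp (-((X y r) ^ 2 / 8)) with hg
  set f : (Fin M → Fin n → Bool) → ℝ :=
    fun ω => Real.exp ((t : ℝ)/512) * ∏ i ∈ I, g (ω i) with hf
  have hprod : ∀ ω : Fin M → Fin n → Bool,
      ∏ i ∈ I, g (ω i) = Real.exp (-((∑ i ∈ I, (X y (ω i)) ^ 2)/8)) := by
    intro ω
    rw [← Real.exp_sum]
    congr 1
    rw [Finset.sum_neg_distrib, ← Finset.sum_div]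
  have hcard : ((Finset.univ.filter (fun ω : Fin M → Fin n → Bool =>
        ∑ i ∈ I, (X y (ω i)) ^ 2 ≤ (t : ℝ)/64)).card : ℝ) ≤ ∑ ω : Fin M → Fin n → Bool, f ω := by
    apply card_filter_le_sum_exp _ f (fun ω => (by positivity : (0:ℝ) ≤ f ω))
    intro ω hω
    show 1 ≤ Real.exp ((t : ℝ)/512) * ∏ i ∈ I, g (ω i)
    rw [hprod ω, ← Real.exp_add]
    rw [show (1:ℝ) = Real.exp 0 from (Real.exp_zero).symm]
    apply Real.exp_le_exp.mpr
    have : (t:ℝ)/512 = ((t:ℝ)/64)/8 := by ring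
    rw [this]
    have h8 : (∑ i ∈ I, (X y (ω i)) ^ 2)/8 ≤ ((t:ℝ)/64)/8 := by linarith
    linarith
  have hsum : ∑ ω : Fin M → Fin n → Bool, f ω
      = Real.exp ((t : ℝ)/512) * ((∑ r : Fin n → Bool, g r) ^ t * ((2:ℝ) ^ n) ^ (M - t)) := by
    rw [hf, ← Finset.mul_sum, prod_rows I g]
  have hrow : ∑ r : Fin n → Bool, g r ≤ 2 ^ n * (15/16) := row_exp_bound y hy hy1
  have hrownn : (0:ℝ) ≤ ∑ r : Fin n → Bool, g r :=
    Finset.sum_nonneg fun r _ => (Real.exp_pos _).le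
  have htM : t ≤ M := by
    rw [ht]
    calc I.card ≤ (Finset.univ : Finset (Fin M)).card := Finset.card_le_card (Finset.subset_univ I)
      _ = M := by simp
  have hpowsplit : ((2:ℝ) ^ n * (15/16)) ^ t * ((2:ℝ) ^ n) ^ (M - t)
      = (2:ℝ) ^ (n*M) * (15/16) ^ t := by
    have hpp : ((2:ℝ) ^ n) ^ t * ((2:ℝ) ^ n) ^ (M - t) = (2:ℝ) ^ (n*M) := by
      rw [← pow_add, Nat.add_sub_cancel' htM, ← pow_mul]
    calc ((2:ℝ) ^ n * (15/16)) ^ t * ((2:ℝ) ^ n) ^ (M - t)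
        = (((2:ℝ) ^ n) ^ t * ((2:ℝ) ^ n) ^ (M - t)) * ((15:ℝ)/16) ^ t := by
          rw [mul_pow]; ring
      _ = (2:ℝ) ^ (n*M) * (15/16) ^ t := by rw [hpp]
  have h1516 : ((15:ℝ)/16) ^ t ≤ Real.exp (-(t:ℝ)/16) := by
    have hbase : (15:ℝ)/16 ≤ Real.exp (-(1:ℝ)/16) := by
      have := Real.add_one_le_exp (-(1:ℝ)/16)
      linarith
    calc ((15:ℝ)/16) ^ t ≤ (Real.exp (-(1:ℝ)/16)) ^ t := by
          apply pow_le_pow_left₀ (by norm_num) hbase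
      _ = Real.exp (-(t:ℝ)/16) := by
          rw [← Real.exp_nat_mul]
          congr 1
          ring
  have hfin : Real.exp ((t : ℝ)/512) * ((2:ℝ) ^ (n*M) * (15/16) ^ t)
      ≤ (2:ℝ) ^ (n*M) * Real.exp (-(t : ℝ)/20) := by
    have h2 : Real.exp ((t : ℝ)/512) * ((15:ℝ)/16) ^ t ≤ Real.exp (-(t:ℝ)/20) := by
      calc Real.exp ((t : ℝ)/512) * ((15:ℝ)/16) ^ t
          ≤ Real.exp ((t : ℝ)/512) * Real.exp (-(t:ℝ)/16) :=
            mul_le_mul_of_nonneg_left h1516 (Real.exp_pos _).le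
        _ = Real.exp ((t:ℝ)/512 - (t:ℝ)/16) := by rw [← Real.exp_add]; ring_nf
        _ ≤ Real.exp (-(t:ℝ)/20) := by
            apply Real.exp_le_exp.mpr
            have : (0:ℝ) ≤ (t:ℝ) := Nat.cast_nonneg t
            linarith
    calc Real.exp ((t : ℝ)/512) * ((2:ℝ) ^ (n*M) * (15/16) ^ t)
        = (2:ℝ) ^ (n*M) * (Real.exp ((t : ℝ)/512) * ((15:ℝ)/16) ^ t) := by ring
      _ ≤ (2:ℝ) ^ (n*M) * Real.exp (-(t:ℝ)/20) := by
          apply mul_le_mul_of_nonneg_left h2 (by positivity)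
  calc ((Finset.univ.filter (fun ω : Fin M → Fin n → Bool =>
        ∑ i ∈ I, (X y (ω i)) ^ 2 ≤ (I.card : ℝ)/64)).card : ℝ)
      ≤ ∑ ω : Fin M → Fin n → Bool, f ω := hcard
    _ = Real.exp ((t : ℝ)/512) * ((∑ r : Fin n → Bool, g r) ^ t * ((2:ℝ) ^ n) ^ (M - t)) := hsum
    _ ≤ Real.exp ((t : ℝ)/512) * (((2:ℝ) ^ n * (15/16)) ^ t * ((2:ℝ) ^ n) ^ (M - t)) := by
        apply mul_le_mul_of_nonneg_left _ (Real.exp_pos _).le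
        apply mul_le_mul_of_nonneg_right _ (by positivity)
        exact pow_le_pow_left₀ hrownn hrow t
    _ = Real.exp ((t : ℝ)/512) * ((2:ℝ) ^ (n*M) * (15/16) ^ t) := by rw [hpowsplit]
    _ ≤ (2:ℝ) ^ (n*M) * Real.exp (-(t : ℝ)/20) := hfin

lemma count_pair_one_side (z : Fin M → ℝ) (y : Fin n → ℝ)
    (hz : ∑ i, (z i) ^ 2 ≤ 1) (hy : ∑ j, (y j) ^ 2 ≤ 1) :
    ((Finset.univ.filter (fun ω : Fin M → Fin n → Bool =>
        4 * Real.sqrt M ≤ ∑ i, z i * X y (ω i))).card : ℝ)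
      ≤ (2:ℝ) ^ (n*M) * Real.exp (-(8 * (M:ℝ))) := by
  classical
  set lam : ℝ := 4 * Real.sqrt M with hlam
  have hlamnn : 0 ≤ lam := by positivity
  have hlamsq : lam ^ 2 = 16 * M := by
    rw [hlam, mul_pow, Real.sq_sqrt (Nat.cast_nonneg M)]
    ring
  set c : Fin M × Fin n → ℝ := fun p => lam * (z p.1 * y p.2) with hc
  have hW : ∀ ω : Fin M → Fin n → Bool,
      Wsum Finset.univ c (fun p => ω p.1 p.2) = lam * ∑ i, z i * X y (ω i) := by
    intro ω
    rw [Wsum, Fintype.sum_prod_type, Finset.mul_sum]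
    apply Finset.sum_congr rfl
    intro i _
    rw [X, Finset.mul_sum, Finset.mul_sum]
    apply Finset.sum_congr rfl
    intro j _
    ring
  set f : (Fin M → Fin n → Bool) → ℝ :=
    fun ω => Real.exp (lam * (∑ i, z i * X y (ω i)) - lam * (4 * Real.sqrt M)) with hf
  have hcard : ((Finset.univ.filter (fun ω : Fin M → Fin n → Bool =>
        4 * Real.sqrt M ≤ ∑ i, z i * X y (ω i))).card : ℝ)
      ≤ ∑ ω : Fin M → Fin n → Bool, f ω := by
    apply card_filter_le_sum_exp _ f (fun ω => (Real.exp_pos _).le)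
    intro ω hω
    show 1 ≤ Real.exp (lam * (∑ i, z i * X y (ω i)) - lam * (4 * Real.sqrt M))
    rw [show (1:ℝ) = Real.exp 0 from (Real.exp_zero).symm]
    apply Real.exp_le_exp.mpr
    have := mul_le_mul_of_nonneg_left hω hlamnn
    linarith
  have hmgf : ∑ ω : Fin M → Fin n → Bool, Real.exp (lam * ∑ i, z i * X y (ω i))
      ≤ (2:ℝ) ^ (n*M) * Real.exp (8 * M) := by
    have hsum_eq : ∑ ω : Fin M → Fin n → Bool, Real.exp (lam * ∑ i, z i * X y (ω i))
        = ∑ w : Fin M × Fin n → Bool, Real.exp (Wsum Finset.univ c w) := by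
      rw [← Equiv.sum_comp (Equiv.curry (Fin M) (Fin n) Bool)
        (fun w => Real.exp (lam * ∑ i, z i * X y (w i)))]
      apply Finset.sum_congr rfl
      intro w _
      rw [← hW (Equiv.curry (Fin M) (Fin n) Bool w)]
      rfl
    rw [hsum_eq]
    have hmg := sum_mgf (Finset.univ : Finset (Fin M × Fin n)) c
    have hcsum : ∑ p : Fin M × Fin n, (c p) ^ 2 ≤ 16 * M := by
      have : ∑ p : Fin M × Fin n, (c p) ^ 2
          = lam ^ 2 * ((∑ i, (z i) ^ 2) * (∑ j, (y j) ^ 2)) := by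
        rw [Fintype.sum_prod_type]
        rw [Finset.sum_mul_sum, Finset.mul_sum]
        apply Finset.sum_congr rfl
        intro i _
        rw [Finset.mul_sum]
        apply Finset.sum_congr rfl
        intro j _
        ring
      rw [this, hlamsq]
      have h01 : (0:ℝ) ≤ ∑ i, (z i) ^ 2 := Finset.sum_nonneg fun _ _ => sq_nonneg _
      have h02 : (0:ℝ) ≤ ∑ j, (y j) ^ 2 := Finset.sum_nonneg fun _ _ => sq_nonneg _
      have : (∑ i, (z i) ^ 2) * (∑ j, (y j) ^ 2) ≤ 1 := by nlinarith
      nlinarith [Nat.cast_nonneg (α := ℝ) M]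
    calc ∑ w : Fin M × Fin n → Bool, Real.exp (Wsum Finset.univ c w)
        ≤ 2 ^ Fintype.card (Fin M × Fin n) * Real.exp ((∑ p : Fin M × Fin n, (c p) ^ 2) / 2) := hmg
      _ ≤ (2:ℝ) ^ (n*M) * Real.exp (8 * M) := by
          rw [Fintype.card_prod, Fintype.card_fin, Fintype.card_fin]
          rw [show M * n = n * M from Nat.mul_comm M n]
          apply mul_le_mul_of_nonneg_left _ (by positivity)
          apply Real.exp_le_exp.mpr
          linarith
  have hsplit : ∑ ω : Fin M → Fin n → Bool, f ω
      = Real.exp (-(lam * (4 * Real.sqrt M)))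
          * ∑ ω : Fin M → Fin n → Bool, Real.exp (lam * ∑ i, z i * X y (ω i)) := by
    rw [Finset.mul_sum]
    apply Finset.sum_congr rfl
    intro ω _
    show Real.exp (lam * (∑ i, z i * X y (ω i)) - lam * (4 * Real.sqrt M))
        = Real.exp (-(lam * (4 * Real.sqrt M))) * Real.exp (lam * ∑ i, z i * X y (ω i))
    rw [← Real.exp_add]
    congr 1
    ring
  have hlam4 : lam * (4 * Real.sqrt M) = 16 * M := by
    rw [hlam]
    have : Real.sqrt M * Real.sqrt M = M := Real.mul_self_sqrt (Nat.cast_nonneg M)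
    nlinarith [this]
  calc ((Finset.univ.filter (fun ω : Fin M → Fin n → Bool =>
        4 * Real.sqrt M ≤ ∑ i, z i * X y (ω i))).card : ℝ)
      ≤ ∑ ω : Fin M → Fin n → Bool, f ω := hcard
    _ = Real.exp (-(lam * (4 * Real.sqrt M)))
          * ∑ ω : Fin M → Fin n → Bool, Real.exp (lam * ∑ i, z i * X y (ω i)) := hsplit
    _ ≤ Real.exp (-(16 * M)) * ((2:ℝ) ^ (n*M) * Real.exp (8 * M)) := by
        rw [hlam4]
        apply mul_le_mul_of_nonneg_left hmgf (Real.exp_pos _).le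
    _ = (2:ℝ) ^ (n*M) * Real.exp (-(8 * (M:ℝ))) := by
        rw [← mul_assoc, mul_comm (Real.exp _) _, mul_assoc, ← Real.exp_add]
        congr 2
        ring

lemma count_pair (z : Fin M → ℝ) (y : Fin n → ℝ)
    (hz : ∑ i, (z i) ^ 2 ≤ 1) (hy : ∑ j, (y j) ^ 2 ≤ 1) :
    ((Finset.univ.filter (fun ω : Fin M → Fin n → Bool =>
        4 * Real.sqrt M ≤ |∑ i, z i * X y (ω i)|)).card : ℝ)
      ≤ (2:ℝ) ^ (n*M) * (2 * Real.exp (-(8 * (M:ℝ)))) := by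
  classical
  have hsub : (Finset.univ.filter (fun ω : Fin M → Fin n → Bool =>
        4 * Real.sqrt M ≤ |∑ i, z i * X y (ω i)|))
      ⊆ (Finset.univ.filter (fun ω : Fin M → Fin n → Bool =>
        4 * Real.sqrt M ≤ ∑ i, z i * X y (ω i)))
        ∪ (Finset.univ.filter (fun ω : Fin M → Fin n → Bool =>
        4 * Real.sqrt M ≤ ∑ i, (-z) i * X y (ω i))) := by
    intro ω hω
    rw [Finset.mem_filter] at hω
    rcases le_abs.mp hω.2 with h | h
    · apply Finset.mem_union_left
      rw [Finset.mem_filter]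
      exact ⟨Finset.mem_univ ω, h⟩
    · apply Finset.mem_union_right
      rw [Finset.mem_filter]
      refine ⟨Finset.mem_univ ω, ?_⟩
      calc 4 * Real.sqrt M ≤ -∑ i, z i * X y (ω i) := h
        _ = ∑ i, (-z) i * X y (ω i) := by
            rw [← Finset.sum_neg_distrib]
            apply Finset.sum_congr rfl
            intro i _
            simp
  have hz' : ∑ i, ((-z) i) ^ 2 ≤ 1 := by
    calc ∑ i, ((-z) i) ^ 2 = ∑ i, (z i) ^ 2 := by
          apply Finset.sum_congr rfl; intro i _; simp
      _ ≤ 1 := hz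
  calc ((Finset.univ.filter (fun ω : Fin M → Fin n → Bool =>
        4 * Real.sqrt M ≤ |∑ i, z i * X y (ω i)|)).card : ℝ)
      ≤ (((Finset.univ.filter (fun ω : Fin M → Fin n → Bool =>
        4 * Real.sqrt M ≤ ∑ i, z i * X y (ω i)))
        ∪ (Finset.univ.filter (fun ω : Fin M → Fin n → Bool =>
        4 * Real.sqrt M ≤ ∑ i, (-z) i * X y (ω i)))).card : ℝ) := by
        exact_mod_cast Nat.cast_le.mpr (Finset.card_le_card hsub)
    _ ≤ ((Finset.univ.filter (fun ω : Fin M → Fin n → Bool =>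
        4 * Real.sqrt M ≤ ∑ i, z i * X y (ω i))).card : ℝ)
        + ((Finset.univ.filter (fun ω : Fin M → Fin n → Bool =>
        4 * Real.sqrt M ≤ ∑ i, (-z) i * X y (ω i))).card : ℝ) := by
        exact_mod_cast Nat.cast_le.mpr (Finset.card_union_le _ _)
    _ ≤ (2:ℝ) ^ (n*M) * Real.exp (-(8 * (M:ℝ))) + (2:ℝ) ^ (n*M) * Real.exp (-(8 * (M:ℝ))) :=
        add_le_add (count_pair_one_side z y hz hy) (count_pair_one_side (-z) y hz' hy)
    _ = (2:ℝ) ^ (n*M) * (2 * Real.exp (-(8 * (M:ℝ)))) := by ring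
end Counting
open MeasureTheory Metric



variable {d : ℕ}

private lemma sep_card_bound {ρ : ℝ} (hρ : 0 < ρ)
    (F : Finset (EuclideanSpace ℝ (Fin d)))
    (hF1 : ∀ y ∈ F, ‖y‖ ≤ 1)
    (hsep : ∀ a ∈ F, ∀ b ∈ F, a ≠ b → ρ ≤ dist a b) :
    (F.card : ℝ) ≤ (1 + 2/ρ) ^ d := by
  set V := volume (ball (0 : EuclideanSpace ℝ (Fin d)) 1) with hV
  have hVpos : (0 : ENNReal) < V := measure_ball_pos volume _ one_pos
  have hVtop : V < ⊤ := measure_ball_lt_top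
  have hdisj : (F : Set (EuclideanSpace ℝ (Fin d))).PairwiseDisjoint
      (fun y => ball y (ρ/2)) := by
    intro a _ b _ hab
    apply Metric.ball_disjoint_ball
    rw [show ρ/2 + ρ/2 = ρ by ring]
    exact hsep a ‹_› b ‹_› hab
  have hsub : ∀ y ∈ F, ball y (ρ/2) ⊆ ball (0 : EuclideanSpace ℝ (Fin d)) (1 + ρ/2) := by
    intro y hy z hz
    rw [mem_ball] at hz ⊢
    have : dist z (0 : EuclideanSpace ℝ (Fin d)) ≤ dist z y + dist y 0 := dist_triangle _ _ _
    have hy0 : dist y (0 : EuclideanSpace ℝ (Fin d)) ≤ 1 := by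
      rw [dist_zero_right]; exact hF1 y hy
    linarith
  have hunion : ∑ y ∈ F, volume (ball y (ρ/2)) ≤ volume (ball (0 : EuclideanSpace ℝ (Fin d)) (1 + ρ/2)) := by
    rw [← measure_biUnion_finset hdisj (fun y _ => measurableSet_ball)]
    apply measure_mono
    exact Set.iUnion₂_subset hsub
  have hsmall : ∀ y ∈ F, volume (ball y (ρ/2)) = ENNReal.ofReal ((ρ/2) ^ d) * V := by
    intro y _
    rw [Measure.addHaar_ball_of_pos volume y (by linarith), finrank_euclideanSpace_fin]
  have hbig : volume (ball (0 : EuclideanSpace ℝ (Fin d)) (1 + ρ/2))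
      = ENNReal.ofReal ((1 + ρ/2) ^ d) * V := by
    rw [Measure.addHaar_ball_of_pos volume _ (by linarith), finrank_euclideanSpace_fin]
  rw [Finset.sum_congr rfl hsmall, Finset.sum_const, hbig] at hunion
  have hc : (F.card : ENNReal) * (ENNReal.ofReal ((ρ/2) ^ d) * V)
      ≤ ENNReal.ofReal ((1 + ρ/2) ^ d) * V := by
    simpa [nsmul_eq_mul] using hunion
  rw [← mul_assoc] at hc
  have hc2 : (F.card : ENNReal) * ENNReal.ofReal ((ρ/2) ^ d)
      ≤ ENNReal.ofReal ((1 + ρ/2) ^ d) :=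
    (ENNReal.mul_le_mul_iff_left hVpos.ne' hVtop.ne).mp hc
  have hc3 : ENNReal.ofReal ((F.card : ℝ) * ((ρ/2) ^ d)) ≤ ENNReal.ofReal ((1 + ρ/2) ^ d) := by
    rw [ENNReal.ofReal_mul (by positivity)]
    simpa [ENNReal.ofReal_natCast] using hc2
  have hreal : (F.card : ℝ) * ((ρ/2) ^ d) ≤ (1 + ρ/2) ^ d :=
    (ENNReal.ofReal_le_ofReal_iff (by positivity)).mp hc3
  have hpow : (0:ℝ) < (ρ/2) ^ d := by positivity
  rw [show (1 + 2/ρ : ℝ) = (1 + ρ/2) / (ρ/2) from by field_simp; ring, div_pow]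
  rw [le_div_iff₀ hpow]
  exact hreal

lemma exists_net (d : ℕ) {ρ : ℝ} (hρ : 0 < ρ) :
    ∃ F : Finset (EuclideanSpace ℝ (Fin d)),
      (∀ y ∈ F, ‖y‖ ≤ 1) ∧
      (∀ x : EuclideanSpace ℝ (Fin d), ‖x‖ ≤ 1 → ∃ y ∈ F, ‖x - y‖ ≤ ρ) ∧
      (F.card : ℝ) ≤ (1 + 2/ρ) ^ d := by
  classical
  set P : ℕ → Prop := fun k => ∃ F : Finset (EuclideanSpace ℝ (Fin d)),
      (∀ y ∈ F, ‖y‖ ≤ 1) ∧ (∀ a ∈ F, ∀ b ∈ F, a ≠ b → ρ ≤ dist a b) ∧ F.card = k with hP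
  have hbound : ∀ k, P k → (k : ℝ) ≤ (1 + 2/ρ) ^ d := by
    rintro k ⟨F, h1, h2, rfl⟩
    exact sep_card_bound hρ F h1 h2
  set B : ℕ := ⌊(1 + 2/ρ : ℝ) ^ d⌋₊ with hB
  have hboundN : ∀ k, P k → k ≤ B := fun k hk => Nat.le_floor (hbound k hk)
  have hP0 : P 0 := ⟨∅, by simp, by simp, rfl⟩
  set k0 := Nat.findGreatest P B with hk0
  have hPk0 : P k0 := Nat.findGreatest_spec (Nat.zero_le B) hP0
  obtain ⟨F, hF1, hFsep, hFcard⟩ := hPk0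
  refine ⟨F, hF1, ?_, hFcard ▸ hbound k0 ⟨F, hF1, hFsep, hFcard⟩⟩
  intro x hx
  by_contra hcon
  push_neg at hcon
  have hxF : x ∉ F := by
    intro hxF
    have := hcon x hxF
    simp at this
    linarith
  have hP1 : P (k0 + 1) := by
    refine ⟨insert x F, ?_, ?_, by rw [Finset.card_insert_of_notMem hxF, hFcard]⟩
    · intro y hy
      rcases Finset.mem_insert.mp hy with h | h
      · subst h; exact hx
      · exact hF1 y h
    · intro a ha b hb hab
      rcases Finset.mem_insert.mp ha with h | h <;>
        rcases Finset.mem_insert.mp hb with h' | h'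
      · exact absurd (h.trans h'.symm) hab
      · subst h
        have := hcon b h'
        rw [← dist_eq_norm] at this
        linarith
      · subst h'
        have := hcon a h
        rw [← dist_eq_norm] at this
        rw [dist_comm]
        linarith
      · exact hFsep a h b h' hab
  exact Nat.findGreatest_is_greatest (lt_add_one k0) (hboundN _ hP1) hP1


section OpNorm

variable {n M : ℕ}

/-- The linear map associated to the random sign matrix. -/
noncomputable def Tmap (ω : Fin M → Fin n → Bool) :
    EuclideanSpace ℝ (Fin n) →L[ℝ] EuclideanSpace ℝ (Fin M) :=
  LinearMap.toContinuousLinearMap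
    { toFun := fun v => WithLp.toLp 2 (fun i => X (fun j => v j) (ω i))
      map_add' := by
        intro v w
        ext i
        show X (fun j => (v + w) j) (ω i) = X (fun j => v j) (ω i) + X (fun j => w j) (ω i)
        unfold X
        rw [← Finset.sum_add_distrib]
        apply Finset.sum_congr rfl
        intro j _
        show (v + w) j * sgn (ω i j) = v j * sgn (ω i j) + w j * sgn (ω i j)
        have h : (v + w) j = v j + w j := rfl
        rw [h]
        ring
      map_smul' := by
        intro c v
        ext i
        show X (fun j => (c • v) j) (ω i) = c * X (fun j => v j) (ω i)
        unfold X
        rw [Finset.mul_sum]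
        apply Finset.sum_congr rfl
        intro j _
        show (c • v) j * sgn (ω i j) = c * (v j * sgn (ω i j))
        have h : (c • v) j = c * v j := rfl
        rw [h]
        ring }

lemma Tmap_apply (ω : Fin M → Fin n → Bool) (v : EuclideanSpace ℝ (Fin n)) (i : Fin M) :
    Tmap ω v i = X (fun j => v j) (ω i) := rfl

lemma euclid_norm_eq (k : ℕ) (v : EuclideanSpace ℝ (Fin k)) :
    ‖v‖ = Real.sqrt (∑ i, (v i) ^ 2) := by
  rw [EuclideanSpace.norm_eq]
  congr 1
  apply Finset.sum_congr rfl
  intro i _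
  rw [Real.norm_eq_abs, sq_abs]

lemma euclid_inner_eq (k : ℕ) (v w : EuclideanSpace ℝ (Fin k)) :
    (inner ℝ v w : ℝ) = ∑ i, v i * w i := by
  rw [PiLp.inner_apply]
  apply Finset.sum_congr rfl
  intro i _
  rw [RCLike.inner_apply, starRingEnd_apply]
  simp [mul_comm]

/-- Bound the operator norm of `Tmap ω` from bilinear bounds on a pair of `1/4`-nets. -/
lemma opnorm_from_net (ω : Fin M → Fin n → Bool) (τ : ℝ) (hτ : 0 ≤ τ)
    (Fn : Finset (EuclideanSpace ℝ (Fin n))) (FM : Finset (EuclideanSpace ℝ (Fin M)))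
    (hFn : ∀ x : EuclideanSpace ℝ (Fin n), ‖x‖ ≤ 1 → ∃ y ∈ Fn, ‖x - y‖ ≤ 1/4)
    (hFM : ∀ x : EuclideanSpace ℝ (Fin M), ‖x‖ ≤ 1 → ∃ y ∈ FM, ‖x - y‖ ≤ 1/4)
    (hbil : ∀ y ∈ Fn, ∀ z ∈ FM, |∑ i, z i * X (fun j => y j) (ω i)| ≤ τ) :
    ‖Tmap ω‖ ≤ 2 * τ := by
  set T := Tmap ω with hT
  -- step 2 : net points have small image
  have step2 : ∀ y ∈ Fn, ‖T y‖ ≤ (4/3) * τ := by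
    intro y hy
    rcases eq_or_ne (‖T y‖) 0 with h0 | h0
    · rw [h0]; positivity
    have hpos : 0 < ‖T y‖ := lt_of_le_of_ne (norm_nonneg _) (Ne.symm h0)
    set w : EuclideanSpace ℝ (Fin M) := ‖T y‖⁻¹ • (T y) with hw
    have hwnorm : ‖w‖ = 1 := by
      rw [hw, norm_smul, norm_inv, norm_norm]
      field_simp
    obtain ⟨z, hzF, hz⟩ := hFM w (by rw [hwnorm])
    have hinner1 : (inner ℝ (T y) w : ℝ) = ‖T y‖ := by
      rw [hw, real_inner_smul_right, real_inner_self_eq_norm_sq]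
      field_simp
    have hinner2 : (inner ℝ (T y) (w - z) : ℝ) ≤ ‖T y‖ * (1/4) := by
      calc (inner ℝ (T y) (w - z) : ℝ) ≤ ‖T y‖ * ‖w - z‖ := real_inner_le_norm _ _
        _ ≤ ‖T y‖ * (1/4) := by
            apply mul_le_mul_of_nonneg_left hz (norm_nonneg _)
    have hinner3 : (inner ℝ (T y) z : ℝ) ≤ τ := by
      have : (inner ℝ (T y) z : ℝ) = ∑ i, z i * X (fun j => y j) (ω i) := by
        rw [euclid_inner_eq]
        apply Finset.sum_congr rfl
        intro i _
        rw [Tmap_apply]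
        ring
      rw [this]
      exact le_trans (le_abs_self _) (hbil y hy z hzF)
    have hsplit : (inner ℝ (T y) w : ℝ) = inner ℝ (T y) z + inner ℝ (T y) (w - z) := by
      rw [← inner_add_right]
      congr 1
      abel
    have : ‖T y‖ ≤ τ + ‖T y‖ * (1/4) := by
      rw [← hinner1, hsplit]
      linarith
    linarith
  -- step 1+3 : bound on unit vectors, then opNorm
  have hunit : ∀ v : EuclideanSpace ℝ (Fin n), ‖v‖ = 1 → ‖T v‖ ≤ (4/3) * τ + ‖T‖ * (1/4) := by
    intro v hv
    obtain ⟨y, hyF, hy⟩ := hFn v (le_of_eq hv)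
    calc ‖T v‖ = ‖T y + T (v - y)‖ := by
          congr 1
          rw [← map_add]
          congr 1
          abel
      _ ≤ ‖T y‖ + ‖T (v - y)‖ := norm_add_le _ _
      _ ≤ (4/3) * τ + ‖T‖ * (1/4) := by
          apply add_le_add (step2 y hyF)
          calc ‖T (v - y)‖ ≤ ‖T‖ * ‖v - y‖ := T.le_opNorm _
            _ ≤ ‖T‖ * (1/4) := mul_le_mul_of_nonneg_left hy (norm_nonneg _)
  have hbound : ‖T‖ ≤ (4/3) * τ + ‖T‖ * (1/4) := by
    apply ContinuousLinearMap.opNorm_le_bound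
    · have := norm_nonneg T; positivity
    · intro x
      rcases eq_or_ne x 0 with rfl | hx0
      · simp
      have hxn : 0 < ‖x‖ := norm_pos_iff.mpr hx0
      have hv : ‖(‖x‖⁻¹ • x : EuclideanSpace ℝ (Fin n))‖ = 1 := by
        rw [norm_smul, norm_inv, norm_norm]
        field_simp
      have h1 := hunit (‖x‖⁻¹ • x) hv
      rw [_root_.map_smul, norm_smul, norm_inv, norm_norm] at h1
      have h2 : ‖T x‖ = ‖x‖ * (‖x‖⁻¹ * ‖T x‖) := by field_simp
      rw [h2]
      rw [mul_comm (((4:ℝ)/3) * τ + ‖T‖ * (1/4)) ‖x‖]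
      exact mul_le_mul_of_nonneg_left h1 hxn.le
  linarith [norm_nonneg T]

end OpNorm

section Numeric

lemma exp_one_ge_271 : (2.71 : ℝ) ≤ Real.exp 1 := by
  linarith [Real.exp_one_gt_d9]

lemma pow_self_le_exp_mul_factorial : ∀ g : ℕ, (g : ℝ) ^ g ≤ Real.exp 1 ^ g * (Nat.factorial g) := by
  intro g
  induction g with
  | zero => simp
  | succ k ih =>
    rcases Nat.eq_zero_or_pos k with rfl | hk
    · have h : (1:ℝ) ≤ Real.exp 1 := by linarith [Real.exp_one_gt_d9]
      simpa using h
    have hk1 : (1:ℝ) ≤ (k:ℝ) := by exact_mod_cast hk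
    have hkpos : (0:ℝ) < (k:ℝ) := by linarith
    have hstep : ((k:ℝ) + 1) ^ k ≤ Real.exp 1 * (k:ℝ) ^ k := by
      have h1 : ((k:ℝ) + 1) = (k:ℝ) * (1 + 1/(k:ℝ)) := by field_simp
      have h2 : ((1:ℝ) + 1/(k:ℝ)) ^ k ≤ Real.exp 1 := by
        have h3 : (1:ℝ) + 1/(k:ℝ) ≤ Real.exp (1/(k:ℝ)) := by
          have := Real.add_one_le_exp (1/(k:ℝ))
          linarith
        calc ((1:ℝ) + 1/(k:ℝ)) ^ k ≤ (Real.exp (1/(k:ℝ))) ^ k := by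
              apply pow_le_pow_left₀ (by positivity) h3
          _ = Real.exp ((k:ℝ) * (1/(k:ℝ))) := by rw [← Real.exp_nat_mul]
          _ = Real.exp 1 := by congr 1; field_simp
      calc ((k:ℝ) + 1) ^ k = (k:ℝ) ^ k * ((1:ℝ) + 1/(k:ℝ)) ^ k := by
            rw [h1, mul_pow]
        _ ≤ (k:ℝ) ^ k * Real.exp 1 := by
            apply mul_le_mul_of_nonneg_left h2 (by positivity)
        _ = Real.exp 1 * (k:ℝ) ^ k := by ring
    have hcast : ((k + 1 : ℕ) : ℝ) = (k:ℝ) + 1 := by push_cast; ring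
    have hfact : (Nat.factorial (k+1) : ℝ) = ((k:ℝ) + 1) * (Nat.factorial k : ℝ) := by
      rw [Nat.factorial_succ]; push_cast; ring
    calc ((k + 1 : ℕ) : ℝ) ^ (k + 1) = ((k:ℝ) + 1) * ((k:ℝ) + 1) ^ k := by
          rw [hcast]; ring
      _ ≤ ((k:ℝ) + 1) * (Real.exp 1 * (k:ℝ) ^ k) := by
          apply mul_le_mul_of_nonneg_left hstep (by linarith)
      _ ≤ ((k:ℝ) + 1) * (Real.exp 1 * (Real.exp 1 ^ k * (Nat.factorial k : ℝ))) := by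
          apply mul_le_mul_of_nonneg_left _ (by linarith)
          apply mul_le_mul_of_nonneg_left ih (Real.exp_pos 1).le
      _ = Real.exp 1 ^ (k+1) * (Nat.factorial (k+1) : ℝ) := by
          rw [hfact, pow_succ]
          ring

lemma choose_le_exp_seven {M g : ℕ} (hMg : M ≤ 256 * g) :
    (M.choose g : ℝ) ≤ Real.exp (7 * (g:ℝ)) := by
  have hfactpos : (0:ℝ) < (Nat.factorial g : ℝ) := by
    exact_mod_cast Nat.factorial_pos g
  have h1 : (M.choose g : ℝ) ≤ (M:ℝ) ^ g / (Nat.factorial g : ℝ) :=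
    Nat.choose_le_pow_div g M
  have h2 : (M:ℝ) ^ g ≤ (256 * (g:ℝ)) ^ g := by
    apply pow_le_pow_left₀ (Nat.cast_nonneg M)
    exact_mod_cast hMg
  have h3 : (256 * (g:ℝ)) ^ g = 256 ^ g * (g:ℝ) ^ g := by rw [mul_pow]
  have h4 : (g:ℝ) ^ g / (Nat.factorial g : ℝ) ≤ Real.exp 1 ^ g := by
    rw [div_le_iff₀ hfactpos]
    exact pow_self_le_exp_mul_factorial g
  have h5 : (M.choose g : ℝ) ≤ 256 ^ g * Real.exp 1 ^ g := by
    calc (M.choose g : ℝ) ≤ (M:ℝ) ^ g / (Nat.factorial g : ℝ) := h1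
      _ ≤ (256 * (g:ℝ)) ^ g / (Nat.factorial g : ℝ) := by gcongr
      _ = 256 ^ g * ((g:ℝ) ^ g / (Nat.factorial g : ℝ)) := by rw [h3]; ring
      _ ≤ 256 ^ g * Real.exp 1 ^ g := by
          apply mul_le_mul_of_nonneg_left h4 (by positivity)
  have h256 : (256 : ℝ) ≤ Real.exp 6 := by
    have : ((2.71 : ℝ)) ^ 6 ≤ (Real.exp 1) ^ 6 := pow_le_pow_left₀ (by norm_num) exp_one_ge_271 6
    have h6 : (Real.exp 1) ^ 6 = Real.exp 6 := by
      rw [← Real.exp_nat_mul]; norm_num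
    nlinarith [this, h6]
  have h7 : 256 ^ g * Real.exp 1 ^ g ≤ (Real.exp 6 * Real.exp 1) ^ g := by
    rw [mul_pow]
    apply mul_le_mul_of_nonneg_right (pow_le_pow_left₀ (by norm_num) h256 g) (by positivity)
  have h8 : (Real.exp 6 * Real.exp 1) ^ g = Real.exp (7 * (g:ℝ)) := by
    rw [← Real.exp_add]
    rw [← Real.exp_nat_mul]
    congr 1
    ring
  linarith

lemma nine_le_exp : (9 : ℝ) ≤ Real.exp (9/4) := by
  by_contra h
  push_neg at h
  have hx : Real.exp (9/4) ^ 4 < 9 ^ 4 := by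
    apply pow_lt_pow_left₀ h (Real.exp_pos _).le
    norm_num
  have h4 : Real.exp (9/4) ^ 4 = Real.exp 9 := by rw [← Real.exp_nat_mul]; norm_num
  have h1 : ((2.71 : ℝ)) ^ 9 ≤ (Real.exp 1) ^ 9 := pow_le_pow_left₀ (by norm_num) exp_one_ge_271 9
  have h2 : (Real.exp 1) ^ 9 = Real.exp 9 := by rw [← Real.exp_nat_mul]; norm_num
  rw [h4] at hx
  nlinarith [h1, h2]

lemma c513_le_exp : (513 : ℝ) ≤ Real.exp 7 := by
  have h1 : ((2.71 : ℝ)) ^ 7 ≤ (Real.exp 1) ^ 7 := pow_le_pow_left₀ (by norm_num) exp_one_ge_271 7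
  have h2 : (Real.exp 1) ^ 7 = Real.exp 7 := by rw [← Real.exp_nat_mul]; norm_num
  nlinarith [h1, h2]

end Numeric

section Main

variable {n M : ℕ}

/-- Explicit embedding of plain functions into Euclidean space. -/
def toE {k : ℕ} (v : Fin k → ℝ) : EuclideanSpace ℝ (Fin k) := WithLp.toLp 2 v

@[simp] lemma toE_apply {k : ℕ} (v : Fin k → ℝ) (j : Fin k) : toE v j = v j := rfl

lemma toE_norm {k : ℕ} (v : Fin k → ℝ) : ‖toE v‖ = Real.sqrt (∑ j, (v j)^2) :=
  euclid_norm_eq k (toE v)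

lemma X_sub (x y : Fin n → ℝ) (r : Fin n → Bool) :
    X (fun j => x j - y j) r = X x r - X y r := by
  unfold X
  rw [← Finset.sum_sub_distrib]
  apply Finset.sum_congr rfl
  intro j _
  ring

lemma det_part (ω : Fin M → Fin n → Bool) (g t : ℕ)
    (hgt : g + t = M) (hg1 : 1 ≤ g) (ht4 : M ≤ 4 * t) (hgM : (M:ℝ)/256 ≤ (g:ℝ))
    (Nn : Finset (EuclideanSpace ℝ (Fin n)))
    (hNn1 : ∀ y ∈ Nn, ‖y‖ ≤ 1)
    (hNn2 : ∀ x : EuclideanSpace ℝ (Fin n), ‖x‖ ≤ 1 → ∃ y ∈ Nn, ‖x - y‖ ≤ 1/256)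
    (hT : ‖Tmap (n := n) ω‖ ≤ 8 * Real.sqrt M)
    (hG2 : ∀ I : Finset (Fin M), I.card = t → ∀ y ∈ Nn, 99/100 ≤ ∑ j, (y j)^2 →
      (t:ℝ)/64 < ∑ i ∈ I, (X (fun j => y j) (ω i))^2)
    (x : Fin n → ℝ) (hx : ∑ j, (x j)^2 = 1) :
    (M:ℝ)/256 ≤ ((Finset.univ.filter (fun i : Fin M => 1/16 ≤ |X x (ω i)|)).card : ℝ) := by
  classical
  have hxnorm : ‖toE x‖ = 1 := by
    rw [toE_norm, hx, Real.sqrt_one]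
  obtain ⟨y, hyN, hyc⟩ := hNn2 (toE x) (le_of_eq hxnorm)
  have hynorm : ‖y‖ = Real.sqrt (∑ j, (y j)^2) := euclid_norm_eq n y
  have hysnn : (0:ℝ) ≤ ∑ j, (y j)^2 := Finset.sum_nonneg fun _ _ => sq_nonneg _
  have hysq : ‖y‖^2 = ∑ j, (y j)^2 := by
    rw [hynorm, Real.sq_sqrt hysnn]
  have hy99 : 99/100 ≤ ∑ j, (y j)^2 := by
    have h1 : ‖toE x‖ - ‖y‖ ≤ ‖toE x - y‖ := norm_sub_norm_le _ _
    have h2 : (255:ℝ)/256 ≤ ‖y‖ := by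
      rw [hxnorm] at h1
      linarith
    have h3 : ((255:ℝ)/256)^2 ≤ ‖y‖^2 := by
      apply pow_le_pow_left₀ (by norm_num) h2
    rw [hysq] at h3
    nlinarith [h3]
  have hy1 : ∑ j, (y j)^2 ≤ 1 := by
    have := hNn1 y hyN
    nlinarith [hysq, norm_nonneg y]
  have hM1 : 1 ≤ M := by omega
  have ht1 : 1 ≤ t := by omega
  have hsmall : (Finset.univ.filter (fun i : Fin M => ¬ (1/16 ≤ |X x (ω i)|))).card < t := by
    by_contra hcon
    push_neg at hcon
    obtain ⟨I, hIsub, hIcard⟩ := Finset.exists_subset_card_eq hcon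
    have hInn : ∀ v : Fin n → ℝ, (0:ℝ) ≤ ∑ i ∈ I, (X v (ω i))^2 :=
      fun v => Finset.sum_nonneg fun _ _ => sq_nonneg _
    have hA : ∑ i ∈ I, (X x (ω i))^2 < (t:ℝ)/256 := by
      have hne : I.Nonempty := by
        rw [← Finset.card_pos, hIcard]; omega
      calc ∑ i ∈ I, (X x (ω i))^2 < ∑ i ∈ I, (1:ℝ)/256 := by
            apply Finset.sum_lt_sum_of_nonempty hne
            intro i hi
            have hiS := hIsub hi
            rw [Finset.mem_filter] at hiS
            have habs : |X x (ω i)| < 1/16 := hiS.2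
            have h1 : (X x (ω i))^2 = |X x (ω i)|^2 := (sq_abs _).symm
            rw [h1]
            calc |X x (ω i)|^2 < (1/16:ℝ)^2 := by
                  apply pow_lt_pow_left₀ habs (abs_nonneg _)
                  norm_num
              _ = 1/256 := by norm_num
        _ = (t:ℝ)/256 := by
            rw [Finset.sum_const, hIcard, nsmul_eq_mul]
            ring
    have hB : (t:ℝ)/64 < ∑ i ∈ I, (X (fun j => y j) (ω i))^2 :=
      hG2 I hIcard y hyN hy99
    have hd : ∀ j, (toE x - y) j = x j - y j := fun j => rfl
    set d : Fin n → ℝ := fun j => x j - y j with hd_def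
    have hC : ∑ i ∈ I, (X d (ω i))^2 ≤ (M:ℝ)/1024 := by
      have hsub : ∑ i ∈ I, (X d (ω i))^2 ≤ ∑ i : Fin M, (X d (ω i))^2 :=
        Finset.sum_le_sum_of_subset_of_nonneg (Finset.subset_univ I)
          (fun i _ _ => sq_nonneg _)
      have hnorm : ‖Tmap ω (toE x - y)‖ = Real.sqrt (∑ i : Fin M, (X d (ω i))^2) := by
        rw [euclid_norm_eq]
        congr 1
      have hval : ‖Tmap ω (toE x - y)‖ ≤ Real.sqrt M / 32 := by
        calc ‖Tmap ω (toE x - y)‖ ≤ ‖Tmap (n := n) ω‖ * ‖toE x - y‖ := (Tmap ω).le_opNorm _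
          _ ≤ (8 * Real.sqrt M) * (1/256) := by
              apply mul_le_mul hT hyc (norm_nonneg _) (by positivity)
          _ = Real.sqrt M / 32 := by ring
      have h2 : (0:ℝ) ≤ ∑ i : Fin M, (X d (ω i))^2 :=
        Finset.sum_nonneg fun _ _ => sq_nonneg _
      have h4 : (Real.sqrt (∑ i : Fin M, (X d (ω i))^2))^2 ≤ (Real.sqrt M / 32)^2 := by
        apply pow_le_pow_left₀ (Real.sqrt_nonneg _)
        rw [← hnorm]
        exact hval
      rw [Real.sq_sqrt h2] at h4
      have h5 : (Real.sqrt M / 32)^2 = (M:ℝ)/1024 := by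
        rw [div_pow, Real.sq_sqrt (Nat.cast_nonneg M)]
        norm_num
      linarith
    -- Minkowski on the restricted vectors
    have hnorm_calc : ∀ (v : Fin n → ℝ),
        ‖toE (fun i => if i ∈ I then X v (ω i) else 0)‖
          = Real.sqrt (∑ i ∈ I, (X v (ω i))^2) := by
      intro v
      rw [toE_norm]
      congr 1
      rw [show ∑ i : Fin M, (if i ∈ I then X v (ω i) else 0)^2
          = ∑ i : Fin M, (if i ∈ I then (X v (ω i))^2 else 0) from
        Finset.sum_congr rfl (fun i _ => by by_cases h : i ∈ I <;> simp [h])]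
      rw [Finset.sum_ite_mem, Finset.univ_inter]
    have hdecomp : toE (fun i => if i ∈ I then X (fun j => y j) (ω i) else 0)
        = toE (fun i => if i ∈ I then X x (ω i) else 0)
          - toE (fun i => if i ∈ I then X d (ω i) else 0) := by
      ext i
      show (if i ∈ I then X (fun j => y j) (ω i) else 0)
          = (if i ∈ I then X x (ω i) else 0) - (if i ∈ I then X d (ω i) else 0)
      by_cases h : i ∈ I
      · simp only [h, if_true]
        rw [hd_def, X_sub]
        ring
      · simp [h]
    have htri : Real.sqrt (∑ i ∈ I, (X (fun j => y j) (ω i))^2)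
        ≤ Real.sqrt (∑ i ∈ I, (X x (ω i))^2) + Real.sqrt (∑ i ∈ I, (X d (ω i))^2) := by
      rw [← hnorm_calc x, ← hnorm_calc (fun j => y j), ← hnorm_calc d]
      rw [hdecomp]
      exact norm_sub_le _ _
    have hsq64 : Real.sqrt ((t:ℝ)/64) = Real.sqrt t / 8 := by
      rw [Real.sqrt_div (Nat.cast_nonneg t)]
      congr 1
      rw [show (64:ℝ) = 8^2 by norm_num, Real.sqrt_sq (by norm_num)]
    have hsq256 : Real.sqrt ((t:ℝ)/256) = Real.sqrt t / 16 := by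
      rw [Real.sqrt_div (Nat.cast_nonneg t)]
      congr 1
      rw [show (256:ℝ) = 16^2 by norm_num, Real.sqrt_sq (by norm_num)]
    have hsq1024 : Real.sqrt ((M:ℝ)/1024) = Real.sqrt M / 32 := by
      rw [Real.sqrt_div (Nat.cast_nonneg M)]
      congr 1
      rw [show (1024:ℝ) = 32^2 by norm_num, Real.sqrt_sq (by norm_num)]
    have hMt : Real.sqrt M ≤ 2 * Real.sqrt t := by
      calc Real.sqrt M ≤ Real.sqrt (4 * t) := by
            apply Real.sqrt_le_sqrt
            exact_mod_cast ht4
        _ = 2 * Real.sqrt t := by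
            rw [show (4 * (t:ℝ)) = 2^2 * t by ring, Real.sqrt_mul (by positivity),
              Real.sqrt_sq (by norm_num)]
    have h1 : Real.sqrt t / 8 ≤ Real.sqrt (∑ i ∈ I, (X (fun j => y j) (ω i))^2) := by
      rw [← hsq64]
      apply Real.sqrt_le_sqrt
      linarith
    have h2 : Real.sqrt (∑ i ∈ I, (X x (ω i))^2) < Real.sqrt t / 16 := by
      rw [← hsq256]
      exact Real.sqrt_lt_sqrt (hInn x) hA
    have h3 : Real.sqrt (∑ i ∈ I, (X d (ω i))^2) ≤ Real.sqrt M / 32 := by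
      rw [← hsq1024]
      exact Real.sqrt_le_sqrt hC
    have hst : (0:ℝ) ≤ Real.sqrt t := Real.sqrt_nonneg _
    linarith
  have hpartition := Finset.card_filter_add_card_filter_not
    (s := (Finset.univ : Finset (Fin M))) (p := fun i : Fin M => 1/16 ≤ |X x (ω i)|)
  have hcardM : (Finset.univ : Finset (Fin M)).card = M := by simp
  have hbig : g ≤ (Finset.univ.filter (fun i : Fin M => 1/16 ≤ |X x (ω i)|)).card := by
    omega
  calc (M:ℝ)/256 ≤ (g:ℝ) := hgM
    _ ≤ ((Finset.univ.filter (fun i : Fin M => 1/16 ≤ |X x (ω i)|)).card : ℝ) := by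
        exact_mod_cast hbig

end Main

section MainExists

lemma sumsq_le_one_of_norm {k : ℕ} (v : EuclideanSpace ℝ (Fin k)) (h : ‖v‖ ≤ 1) :
    ∑ j, (v j)^2 ≤ 1 := by
  have h1 : ‖v‖ = Real.sqrt (∑ j, (v j)^2) := euclid_norm_eq k v
  have h2 : (0:ℝ) ≤ ∑ j, (v j)^2 := Finset.sum_nonneg fun _ _ => sq_nonneg _
  nlinarith [Real.sq_sqrt h2, norm_nonneg v, h1.symm.trans_le h]

lemma main_exists (n M : ℕ) (hn : 1 ≤ n) (hM1 : 2048 * n ≤ M) (hM2 : 2048 ≤ M) :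
    ∃ ω : Fin M → Fin n → Bool,
      ∀ x : Fin n → ℝ, ∑ j, (x j)^2 = 1 →
        (M:ℝ)/256 ≤ ((Finset.univ.filter (fun i : Fin M => 1/16 ≤ |X x (ω i)|)).card : ℝ) := by
  classical
  obtain ⟨N4n, hN4n1, hN4n2, hN4n3⟩ := exists_net n (ρ := 1/4) (by norm_num)
  obtain ⟨N4M, hN4M1, hN4M2, hN4M3⟩ := exists_net M (ρ := 1/4) (by norm_num)
  obtain ⟨Nn, hNn1, hNn2, hNn3⟩ := exists_net n (ρ := 1/256) (by norm_num)
  rw [show ((1:ℝ) + 2/(1/4)) = 9 by norm_num] at hN4n3 hN4M3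
  rw [show ((1:ℝ) + 2/(1/256)) = 513 by norm_num] at hNn3
  set Nn' := Nn.filter (fun y => 99/100 ≤ ∑ j, (y j)^2) with hNn'def
  set g : ℕ := M / 256 + 1 with hgdef
  set t : ℕ := M - g with htdef
  have hg1 : 1 ≤ g := by omega
  have hgM' : g ≤ M := by omega
  have hgt : g + t = M := by omega
  have ht4 : M ≤ 4 * t := by omega
  have hMg256 : M ≤ 256 * g := by omega
  have hgM : (M:ℝ)/256 ≤ (g:ℝ) := by
    have h0 : (M:ℝ) ≤ 256 * (g:ℝ) := by exact_mod_cast hMg256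
    linarith
  have hnM : n ≤ M := by omega
  set BadOp := Finset.univ.filter (fun ω : Fin M → Fin n → Bool =>
    ∃ y ∈ N4n, ∃ z ∈ N4M, 4 * Real.sqrt M ≤ |∑ i, z i * X (fun j => y j) (ω i)|) with hBadOpDef
  set BadMin := Finset.univ.filter (fun ω : Fin M → Fin n → Bool =>
    ∃ I ∈ Finset.powersetCard t (Finset.univ : Finset (Fin M)), ∃ y ∈ Nn',
      ∑ i ∈ I, (X (fun j => y j) (ω i))^2 ≤ (t:ℝ)/64) with hBadMinDef
  -- counting BadOp
  have hOpCard : (BadOp.card : ℝ) ≤ (N4n.card : ℝ) * (N4M.card : ℝ)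
      * ((2:ℝ)^(n*M) * (2 * Real.exp (-(8 * (M:ℝ))))) := by
    have hsub : BadOp ⊆ N4n.biUnion (fun y => N4M.biUnion (fun z =>
        Finset.univ.filter (fun ω : Fin M → Fin n → Bool =>
          4 * Real.sqrt M ≤ |∑ i, z i * X (fun j => y j) (ω i)|))) := by
      intro ω hω
      rw [hBadOpDef, Finset.mem_filter] at hω
      obtain ⟨-, y, hy, z, hz, hval⟩ := hω
      refine Finset.mem_biUnion.mpr ⟨y, hy, Finset.mem_biUnion.mpr ⟨z, hz, ?_⟩⟩
      rw [Finset.mem_filter]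
      exact ⟨Finset.mem_univ _, hval⟩
    have h1 : BadOp.card ≤ ∑ y ∈ N4n, ∑ z ∈ N4M,
        (Finset.univ.filter (fun ω : Fin M → Fin n → Bool =>
          4 * Real.sqrt M ≤ |∑ i, z i * X (fun j => y j) (ω i)|)).card := by
      calc BadOp.card ≤ _ := Finset.card_le_card hsub
        _ ≤ ∑ y ∈ N4n, (N4M.biUnion (fun z =>
            Finset.univ.filter (fun ω : Fin M → Fin n → Bool =>
              4 * Real.sqrt M ≤ |∑ i, z i * X (fun j => y j) (ω i)|))).card :=
          Finset.card_biUnion_le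
        _ ≤ _ := Finset.sum_le_sum fun y _ => Finset.card_biUnion_le
    have h1' : (BadOp.card : ℝ) ≤ ∑ y ∈ N4n, ∑ z ∈ N4M,
        ((Finset.univ.filter (fun ω : Fin M → Fin n → Bool =>
          4 * Real.sqrt M ≤ |∑ i, z i * X (fun j => y j) (ω i)|)).card : ℝ) := by
      exact_mod_cast Nat.cast_le.mpr h1
    calc (BadOp.card : ℝ) ≤ _ := h1'
      _ ≤ ∑ y ∈ N4n, ∑ z ∈ N4M, ((2:ℝ)^(n*M) * (2 * Real.exp (-(8 * (M:ℝ))))) := by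
          apply Finset.sum_le_sum
          intro y hy
          apply Finset.sum_le_sum
          intro z hz
          exact count_pair (fun i => z i) (fun j => y j)
            (sumsq_le_one_of_norm z (hN4M1 z hz)) (sumsq_le_one_of_norm y (hN4n1 y hy))
      _ = (N4n.card : ℝ) * (N4M.card : ℝ) * ((2:ℝ)^(n*M) * (2 * Real.exp (-(8 * (M:ℝ))))) := by
          rw [Finset.sum_const, Finset.sum_const, nsmul_eq_mul, nsmul_eq_mul]
          ring
  -- counting BadMin
  have hMinCard : (BadMin.card : ℝ) ≤ ((M.choose t : ℕ) : ℝ) * (Nn.card : ℝ)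
      * ((2:ℝ)^(n*M) * Real.exp (-(t:ℝ)/20)) := by
    have hsub : BadMin ⊆ (Finset.powersetCard t (Finset.univ : Finset (Fin M))).biUnion
        (fun I => Nn'.biUnion (fun y =>
          Finset.univ.filter (fun ω : Fin M → Fin n → Bool =>
            ∑ i ∈ I, (X (fun j => y j) (ω i))^2 ≤ (t:ℝ)/64))) := by
      intro ω hω
      rw [hBadMinDef, Finset.mem_filter] at hω
      obtain ⟨-, I, hI, y, hy, hval⟩ := hω
      refine Finset.mem_biUnion.mpr ⟨I, hI, Finset.mem_biUnion.mpr ⟨y, hy, ?_⟩⟩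
      rw [Finset.mem_filter]
      exact ⟨Finset.mem_univ _, hval⟩
    have h1 : BadMin.card ≤ ∑ I ∈ Finset.powersetCard t (Finset.univ : Finset (Fin M)),
        ∑ y ∈ Nn', (Finset.univ.filter (fun ω : Fin M → Fin n → Bool =>
          ∑ i ∈ I, (X (fun j => y j) (ω i))^2 ≤ (t:ℝ)/64)).card := by
      calc BadMin.card ≤ _ := Finset.card_le_card hsub
        _ ≤ _ := Finset.card_biUnion_le
        _ ≤ _ := Finset.sum_le_sum fun I _ => Finset.card_biUnion_le
    have h1' : (BadMin.card : ℝ) ≤ ∑ I ∈ Finset.powersetCard t (Finset.univ : Finset (Fin M)),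
        ∑ y ∈ Nn', ((Finset.univ.filter (fun ω : Fin M → Fin n → Bool =>
          ∑ i ∈ I, (X (fun j => y j) (ω i))^2 ≤ (t:ℝ)/64)).card : ℝ) := by
      exact_mod_cast Nat.cast_le.mpr h1
    have hNn'card : (Nn'.card : ℝ) ≤ (Nn.card : ℝ) := by
      exact_mod_cast Nat.cast_le.mpr (Finset.card_filter_le _ _)
    calc (BadMin.card : ℝ) ≤ _ := h1'
      _ ≤ ∑ I ∈ Finset.powersetCard t (Finset.univ : Finset (Fin M)),
          ∑ y ∈ Nn', ((2:ℝ)^(n*M) * Real.exp (-(t:ℝ)/20)) := by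
          apply Finset.sum_le_sum
          intro I hI
          apply Finset.sum_le_sum
          intro y hy
          rw [hNn'def, Finset.mem_filter] at hy
          have hIc : I.card = t := (Finset.mem_powersetCard.mp hI).2
          have hb := count_min I (fun j => y j) hy.2
            (sumsq_le_one_of_norm y (hNn1 y hy.1))
          rw [hIc] at hb
          exact hb
      _ = ((M.choose t : ℕ) : ℝ) * (Nn'.card : ℝ) * ((2:ℝ)^(n*M) * Real.exp (-(t:ℝ)/20)) := by
          rw [Finset.sum_const, Finset.sum_const, nsmul_eq_mul, nsmul_eq_mul,
            Finset.card_powersetCard, Finset.card_univ, Fintype.card_fin]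
          ring
      _ ≤ ((M.choose t : ℕ) : ℝ) * (Nn.card : ℝ) * ((2:ℝ)^(n*M) * Real.exp (-(t:ℝ)/20)) := by
          apply mul_le_mul_of_nonneg_right _ (by positivity)
          apply mul_le_mul_of_nonneg_left hNn'card (by positivity)
  -- numeric budgets
  have hexp_inv : ∀ b : ℝ, 0 ≤ b → Real.exp (-b) ≤ 1/(1+b) := by
    intro b hb
    have h1 : 1 + b ≤ Real.exp b := by linarith [Real.add_one_le_exp b]
    have h2 : (0:ℝ) < 1 + b := by linarith
    rw [Real.exp_neg]
    rw [inv_le_iff_one_le_mul₀ (Real.exp_pos b)]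
    rw [div_mul_eq_mul_div, le_div_iff₀ h2]
    linarith
  have hP1 : (N4n.card : ℝ) * (N4M.card : ℝ) * ((2:ℝ)^(n*M) * (2 * Real.exp (-(8 * (M:ℝ)))))
      ≤ (2:ℝ)^(n*M) / 4 := by
    have hc1 : (N4n.card : ℝ) ≤ Real.exp ((9/4) * n) := by
      calc (N4n.card : ℝ) ≤ 9^n := hN4n3
        _ ≤ (Real.exp (9/4))^n := pow_le_pow_left₀ (by norm_num) nine_le_exp n
        _ = Real.exp ((9/4) * n) := by
            rw [← Real.exp_nat_mul]
            congr 1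
            ring
    have hc2 : (N4M.card : ℝ) ≤ Real.exp ((9/4) * M) := by
      calc (N4M.card : ℝ) ≤ 9^M := hN4M3
        _ ≤ (Real.exp (9/4))^M := pow_le_pow_left₀ (by norm_num) nine_le_exp M
        _ = Real.exp ((9/4) * M) := by
            rw [← Real.exp_nat_mul]
            congr 1
            ring
    have hprod : (N4n.card : ℝ) * (N4M.card : ℝ) * (2 * Real.exp (-(8 * (M:ℝ))))
        ≤ 2 * Real.exp ((9/4) * n + (9/4) * M - 8 * M) := by
      have e1 : (0:ℝ) ≤ (N4n.card : ℝ) := Nat.cast_nonneg _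
      have e2 : (0:ℝ) ≤ (N4M.card : ℝ) := Nat.cast_nonneg _
      have key : (N4n.card : ℝ) * (N4M.card : ℝ) * Real.exp (-(8 * (M:ℝ)))
          ≤ Real.exp ((9/4) * n) * Real.exp ((9/4) * M) * Real.exp (-(8 * (M:ℝ))) := by
        apply mul_le_mul_of_nonneg_right _ (Real.exp_pos _).le
        apply mul_le_mul hc1 hc2 e2 (Real.exp_pos _).le
      have : Real.exp ((9/4) * n) * Real.exp ((9/4) * M) * Real.exp (-(8 * (M:ℝ)))
          = Real.exp ((9/4) * n + (9/4) * M - 8 * M) := by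
        rw [← Real.exp_add, ← Real.exp_add]
        try congr 1
        try ring
      nlinarith [key, this, Real.exp_pos ((9/4) * n + (9/4) * M - 8 * M)]
    have hsmallexp : 2 * Real.exp ((9/4) * n + (9/4) * M - 8 * M) ≤ 1/4 := by
      have hnMr : (n:ℝ) ≤ (M:ℝ) := by exact_mod_cast hnM
      have hMr : (2048:ℝ) ≤ (M:ℝ) := by exact_mod_cast hM2
      have harg : (9/4) * (n:ℝ) + (9/4) * M - 8 * M ≤ -(7/2) * M := by linarith
      have h1 : Real.exp ((9/4) * (n:ℝ) + (9/4) * M - 8 * M) ≤ Real.exp (-((7/2) * M)) := by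
        apply Real.exp_le_exp.mpr
        linarith
      have h2 : Real.exp (-((7/2) * (M:ℝ))) ≤ 1/(1 + (7/2) * M) := hexp_inv _ (by positivity)
      have h3 : 1/(1 + (7/2) * (M:ℝ)) ≤ 1/8 := by
        rw [div_le_div_iff₀ (by positivity) (by norm_num)]
        linarith
      linarith
    have hpow : (0:ℝ) < (2:ℝ)^(n*M) := by positivity
    calc (N4n.card : ℝ) * (N4M.card : ℝ) * ((2:ℝ)^(n*M) * (2 * Real.exp (-(8 * (M:ℝ)))))
        = (2:ℝ)^(n*M) * ((N4n.card : ℝ) * (N4M.card : ℝ) * (2 * Real.exp (-(8 * (M:ℝ))))) := by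
          ring
      _ ≤ (2:ℝ)^(n*M) * (2 * Real.exp ((9/4) * n + (9/4) * M - 8 * M)) := by
          apply mul_le_mul_of_nonneg_left _ hpow.le
          calc (N4n.card : ℝ) * (N4M.card : ℝ) * (2 * Real.exp (-(8 * (M:ℝ))))
              = (N4n.card : ℝ) * (N4M.card : ℝ) * Real.exp (-(8 * (M:ℝ))) * 2 := by ring
            _ ≤ 2 * Real.exp ((9/4) * n + (9/4) * M - 8 * M) := by
                nlinarith [hprod, Nat.cast_nonneg (α := ℝ) N4n.card,
                  Nat.cast_nonneg (α := ℝ) N4M.card, Real.exp_pos (-(8 * (M:ℝ)))]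
      _ ≤ (2:ℝ)^(n*M) * (1/4) := mul_le_mul_of_nonneg_left hsmallexp hpow.le
      _ = (2:ℝ)^(n*M) / 4 := by ring
  have hP2 : ((M.choose t : ℕ) : ℝ) * (Nn.card : ℝ) * ((2:ℝ)^(n*M) * Real.exp (-(t:ℝ)/20))
      ≤ (2:ℝ)^(n*M) / 4 := by
    have hchoose : ((M.choose t : ℕ) : ℝ) ≤ Real.exp (7 * (g:ℝ)) := by
      have hsymm : M.choose t = M.choose g := by
        rw [htdef]
        exact Nat.choose_symm hgM'
      rw [hsymm]
      exact choose_le_exp_seven hMg256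
    have hNncard : (Nn.card : ℝ) ≤ Real.exp (7 * (n:ℝ)) := by
      calc (Nn.card : ℝ) ≤ 513^n := hNn3
        _ ≤ (Real.exp 7)^n := pow_le_pow_left₀ (by norm_num) c513_le_exp n
        _ = Real.exp (7 * (n:ℝ)) := by
            rw [← Real.exp_nat_mul]
            congr 1
            ring
    have hgR : (g:ℝ) ≤ (M:ℝ)/256 + 1 := by
      rw [hgdef]
      push_cast
      have := Nat.cast_div_le (m := M) (n := 256) (α := ℝ)
      push_cast at this
      linarith
    have htR : (g:ℝ) + (t:ℝ) = (M:ℝ) := by exact_mod_cast hgt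
    have hnR : (n:ℝ) ≤ (M:ℝ)/2048 := by
      have := (Nat.cast_le (α := ℝ)).mpr hM1
      push_cast at this
      linarith
    have hMr : (2048:ℝ) ≤ (M:ℝ) := by exact_mod_cast hM2
    have hargle : 7 * (g:ℝ) + 7 * (n:ℝ) - (t:ℝ)/20 ≤ -3 := by linarith
    have hexp3 : Real.exp (7 * (g:ℝ) + 7 * (n:ℝ) - (t:ℝ)/20) ≤ 1/4 := by
      calc Real.exp (7 * (g:ℝ) + 7 * (n:ℝ) - (t:ℝ)/20) ≤ Real.exp (-3) :=
            Real.exp_le_exp.mpr hargle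
        _ ≤ 1/(1+3) := hexp_inv 3 (by norm_num)
        _ = 1/4 := by norm_num
    have hpow : (0:ℝ) < (2:ℝ)^(n*M) := by positivity
    calc ((M.choose t : ℕ) : ℝ) * (Nn.card : ℝ) * ((2:ℝ)^(n*M) * Real.exp (-(t:ℝ)/20))
        = (2:ℝ)^(n*M) * (((M.choose t : ℕ) : ℝ) * (Nn.card : ℝ) * Real.exp (-(t:ℝ)/20)) := by
          ring
      _ ≤ (2:ℝ)^(n*M) * Real.exp (7 * (g:ℝ) + 7 * (n:ℝ) - (t:ℝ)/20) := by
          apply mul_le_mul_of_nonneg_left _ hpow.le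
          have key : ((M.choose t : ℕ) : ℝ) * (Nn.card : ℝ) * Real.exp (-(t:ℝ)/20)
              ≤ Real.exp (7 * (g:ℝ)) * Real.exp (7 * (n:ℝ)) * Real.exp (-(t:ℝ)/20) := by
            apply mul_le_mul_of_nonneg_right _ (Real.exp_pos _).le
            apply mul_le_mul hchoose hNncard (Nat.cast_nonneg _) (Real.exp_pos _).le
          have heq : Real.exp (7 * (g:ℝ)) * Real.exp (7 * (n:ℝ)) * Real.exp (-(t:ℝ)/20)
              = Real.exp (7 * (g:ℝ) + 7 * (n:ℝ) - (t:ℝ)/20) := by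
            rw [← Real.exp_add, ← Real.exp_add]
            try congr 1
            try ring
          linarith
      _ ≤ (2:ℝ)^(n*M) * (1/4) := mul_le_mul_of_nonneg_left hexp3 hpow.le
      _ = (2:ℝ)^(n*M) / 4 := by ring
  -- extraction of a good ω
  have hcardU : ((Finset.univ : Finset (Fin M → Fin n → Bool)).card : ℝ) = (2:ℝ)^(n*M) := by
    rw [Finset.card_univ]
    have hc : Fintype.card (Fin M → Fin n → Bool) = 2^(n*M) := by
      rw [show Fintype.card (Fin M → Fin n → Bool) = (2^n)^M from by simp [Fintype.card_fun],
        ← pow_mul]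
    rw [hc]
    exact_mod_cast rfl
  have hex : ∃ ω : Fin M → Fin n → Bool, ω ∉ BadOp ∧ ω ∉ BadMin := by
    by_contra h
    push_neg at h
    have hsub : (Finset.univ : Finset (Fin M → Fin n → Bool)) ⊆ BadOp ∪ BadMin := by
      intro ω _
      rcases em (ω ∈ BadOp) with h1 | h1
      · exact Finset.mem_union_left _ h1
      · exact Finset.mem_union_right _ (h ω h1)
    have hc1 : (Finset.univ : Finset (Fin M → Fin n → Bool)).card ≤ (BadOp ∪ BadMin).card :=
      Finset.card_le_card hsub
    have hc2 : (BadOp ∪ BadMin).card ≤ BadOp.card + BadMin.card := Finset.card_union_le _ _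
    have hc3 : ((Finset.univ : Finset (Fin M → Fin n → Bool)).card : ℝ)
        ≤ (BadOp.card : ℝ) + (BadMin.card : ℝ) := by
      exact_mod_cast Nat.cast_le.mpr (hc1.trans hc2)
    rw [hcardU] at hc3
    have hpow : (0:ℝ) < (2:ℝ)^(n*M) := by positivity
    linarith [hOpCard.trans hP1, hMinCard.trans hP2]
  obtain ⟨ω, hωOp, hωMin⟩ := hex
  -- unpack the good event
  rw [hBadOpDef] at hωOp
  simp only [Finset.mem_filter, Finset.mem_univ, true_and] at hωOp
  push_neg at hωOp
  have hT : ‖Tmap (n := n) ω‖ ≤ 8 * Real.sqrt M := by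
    have h := opnorm_from_net ω (4 * Real.sqrt M) (by positivity) N4n N4M hN4n2 hN4M2
      (fun y hy z hz => (hωOp y hy z hz).le)
    linarith
  rw [hBadMinDef] at hωMin
  simp only [Finset.mem_filter, Finset.mem_univ, true_and] at hωMin
  push_neg at hωMin
  have hG2 : ∀ I : Finset (Fin M), I.card = t → ∀ y ∈ Nn, 99/100 ≤ ∑ j, (y j)^2 →
      (t:ℝ)/64 < ∑ i ∈ I, (X (fun j => y j) (ω i))^2 := by
    intro I hIc y hy h99
    have hImem : I ∈ Finset.powersetCard t (Finset.univ : Finset (Fin M)) :=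
      Finset.mem_powersetCard.mpr ⟨Finset.subset_univ I, hIc⟩
    have hymem : y ∈ Nn' := by
      rw [hNn'def, Finset.mem_filter]
      exact ⟨hy, h99⟩
    exact hωMin I hImem y hymem
  exact ⟨ω, fun x hx => det_part ω g t hgt hg1 ht4 hgM Nn hNn1 hNn2 hT hG2 x hx⟩

end MainExists

section RowSums

lemma sum_filter_split {n : ℕ} (v : Fin n → ℝ) (r : Fin n → Bool) :
    (∑ j ∈ Finset.univ.filter (fun j => r j = true), v j = ((∑ j, v j) + X v r)/2)
    ∧ (∑ j ∈ Finset.univ.filter (fun j => r j = false), v j = ((∑ j, v j) - X v r)/2) := by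
  classical
  have hfilt : Finset.univ.filter (fun j => r j = false)
      = Finset.univ.filter (fun j => ¬ r j = true) := by
    apply Finset.filter_congr
    intro j _
    constructor
    · intro h; rw [h]; simp
    · intro h; cases hr : r j
      · rfl
      · exact absurd hr h
  have hsplit := Finset.sum_filter_add_sum_filter_not Finset.univ (fun j => r j = true) v
  have hX : X v r = (∑ j ∈ Finset.univ.filter (fun j => r j = true), v j)
      - ∑ j ∈ Finset.univ.filter (fun j => ¬ r j = true), v j := by
    unfold X
    rw [← Finset.sum_filter_add_sum_filter_not Finset.univ (fun j => r j = true)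
      (fun j => v j * sgn (r j))]
    have h1 : ∑ j ∈ Finset.univ.filter (fun j => r j = true), v j * sgn (r j)
        = ∑ j ∈ Finset.univ.filter (fun j => r j = true), v j := by
      apply Finset.sum_congr rfl
      intro j hj
      rw [Finset.mem_filter] at hj
      rw [hj.2]
      simp [sgn]
    have h2 : ∑ j ∈ Finset.univ.filter (fun j => ¬ r j = true), v j * sgn (r j)
        = - ∑ j ∈ Finset.univ.filter (fun j => ¬ r j = true), v j := by
      rw [← Finset.sum_neg_distrib]
      apply Finset.sum_congr rfl
      intro j hj
      rw [Finset.mem_filter] at hj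
      have hr : r j = false := by
        cases h : r j
        · rfl
        · exact absurd h hj.2
      rw [hr]
      simp [sgn]
    rw [h1, h2]
    ring
  constructor
  · linarith [hsplit, hX]
  · rw [hfilt]
    linarith [hsplit, hX]

end RowSums

end OneBit


set_option maxHeartbeats 2000000 in
open OneBit in
/-- One-bit isometry: there exist absolute constants `α > 0`, `δ₀ ∈ (0,1)`, `c₀ ∈ ℕ` and, for
each `s`, fixed subsets `S_u ⊆ [2^s]` indexed by `u ∈ U` with `|U| = 2^{s+c₀}`, such that for
all `p, q ∈ [0,1]^{2^s}`, a uniformly random `u` satisfies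
`|p(S_u) - q(S_u)| ≥ α·‖p - q‖₂` with probability at least `1 - δ₀`. -/
theorem one_bit_isometry :
    ∃ (α δ₀ : ℝ) (c₀ : ℕ), 0 < α ∧ δ₀ ∈ Set.Ioo (0 : ℝ) 1 ∧
      ∀ s : ℕ, ∃ S : Fin (2 ^ (s + c₀)) → Finset (Fin (2 ^ s)),
        ∀ p q : Fin (2 ^ s) → ℝ,
          (∀ i, p i ∈ Set.Icc (0 : ℝ) 1) → (∀ i, q i ∈ Set.Icc (0 : ℝ) 1) →
          (1 - δ₀) * (2 ^ (s + c₀) : ℝ)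
            ≤ ((Finset.univ.filter fun u : Fin (2 ^ (s + c₀)) =>
                α * Real.sqrt (∑ i, (p i - q i) ^ 2)
                  ≤ |(∑ i ∈ S u, p i) - ∑ i ∈ S u, q i|).card : ℝ) := by
  classical
  refine ⟨1/128, 255/256, 12, by norm_num, ⟨by norm_num, by norm_num⟩, ?_⟩
  intro s
  have hnM : 2048 * 2^s ≤ 2^(s+11) := by
    rw [show s + 11 = 11 + s from by omega, pow_add]
    norm_num
  have hM2 : 2048 ≤ 2^(s+11) := by
    calc (2048:ℕ) = 2^11 := by norm_num
      _ ≤ 2^(s+11) := Nat.pow_le_pow_right (by norm_num) (by omega)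
  obtain ⟨ω, hω⟩ := OneBit.main_exists (2^s) (2^(s+11)) (Nat.two_pow_pos s) hnM hM2
  have hpow : 2^(s+12) = 2*2^(s+11) := by rw [pow_succ]; ring
  have hdiv : ∀ u : Fin (2^(s+12)), u.val / 2 < 2^(s+11) := by
    intro u
    have := u.isLt
    omega
  refine ⟨fun u =>
    if u.val % 2 = 0 then Finset.univ.filter (fun j => ω ⟨u.val/2, hdiv u⟩ j = true)
    else Finset.univ.filter (fun j => ω ⟨u.val/2, hdiv u⟩ j = false), ?_⟩
  set S : Fin (2^(s+12)) → Finset (Fin (2^s)) := fun u =>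
    if u.val % 2 = 0 then Finset.univ.filter (fun j => ω ⟨u.val/2, hdiv u⟩ j = true)
    else Finset.univ.filter (fun j => ω ⟨u.val/2, hdiv u⟩ j = false) with hS_def
  intro p q hp hq
  set x : Fin (2^s) → ℝ := fun j => p j - q j with hx_def
  have hsum_eq : ∀ u, (∑ i ∈ S u, p i) - ∑ i ∈ S u, q i = ∑ i ∈ S u, x i := by
    intro u
    rw [← Finset.sum_sub_distrib]
  have hsq_eq : ∑ i, (p i - q i)^2 = ∑ i, (x i)^2 := rfl
  rw [show ((1:ℝ) - 255/256) = 1/256 from by norm_num]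
  have hsqnn : (0:ℝ) ≤ ∑ i, (x i)^2 := Finset.sum_nonneg fun _ _ => sq_nonneg _
  have hcastpow : ((2:ℝ) ^ (s+12)) = 2 * ((2^(s+11) : ℕ) : ℝ) := by
    push_cast
    rw [pow_succ]
    ring
  by_cases h0 : ∑ i, (x i)^2 = 0
  · -- trivial case : p = q on the ℓ² level
    have hall : ∀ u, u ∈ Finset.univ.filter (fun u : Fin (2^(s+12)) =>
        1/128 * Real.sqrt (∑ i, (p i - q i) ^ 2)
          ≤ |(∑ i ∈ S u, p i) - ∑ i ∈ S u, q i|) := by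
      intro u
      rw [Finset.mem_filter]
      refine ⟨Finset.mem_univ _, ?_⟩
      have hxz : ∀ j, x j = 0 := by
        intro j
        have := (Finset.sum_eq_zero_iff_of_nonneg
          (fun i (_ : i ∈ Finset.univ) => sq_nonneg (x i))).mp h0 j (Finset.mem_univ j)
        exact pow_eq_zero_iff (by norm_num) |>.mp this
      rw [hsum_eq u, Finset.sum_eq_zero (fun i _ => hxz i), hsq_eq, h0, Real.sqrt_zero]
      simp
    have huniv : Finset.univ.filter (fun u : Fin (2^(s+12)) =>
        1/128 * Real.sqrt (∑ i, (p i - q i) ^ 2)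
          ≤ |(∑ i ∈ S u, p i) - ∑ i ∈ S u, q i|) = Finset.univ := by
      apply Finset.eq_univ_of_forall
      intro u
      exact hall u
    rw [huniv, Finset.card_univ, Fintype.card_fin]
    push_cast
    nlinarith [pow_pos (by norm_num : (0:ℝ) < 2) (s+12)]
  · have hpos : (0:ℝ) < ∑ i, (x i)^2 := lt_of_le_of_ne hsqnn (Ne.symm h0)
    have hrrpos : 0 < Real.sqrt (∑ i, (x i)^2) := Real.sqrt_pos.mpr hpos
    set rr : ℝ := Real.sqrt (∑ i, (x i)^2) with hrr_def
    set xh : Fin (2^s) → ℝ := fun j => x j / rr with hxh_def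
    have hxh1 : ∑ j, (xh j)^2 = 1 := by
      rw [hxh_def]
      have : ∀ j ∈ Finset.univ, (x j / rr)^2 = (x j)^2 / rr^2 := by
        intro j _
        rw [div_pow]
      rw [Finset.sum_congr rfl this, ← Finset.sum_div, hrr_def, Real.sq_sqrt hsqnn]
      field_simp
    have hcount := hω xh hxh1
    set G := Finset.univ.filter (fun i : Fin (2^(s+11)) => 1/16 ≤ |X xh (ω i)|) with hG_def
    set σ : ℝ := ∑ j, xh j with hσ_def
    -- evaluation of the subset sums
    have hSval : ∀ u : Fin (2^(s+12)), ∑ j ∈ S u, xh j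
        = (σ + (if u.val % 2 = 0 then 1 else -1) * X xh (ω ⟨u.val/2, hdiv u⟩))/2 := by
      intro u
      rw [hS_def]
      by_cases hu : u.val % 2 = 0
      · simp only [hu, if_true]
        rw [(sum_filter_split xh (ω ⟨u.val/2, hdiv u⟩)).1]
        ring
      · simp only [hu, if_false]
        rw [(sum_filter_split xh (ω ⟨u.val/2, hdiv u⟩)).2]
        ring
    have hSeven : ∀ (i : Fin (2^(s+11))) (h : 2*i.val < 2^(s+12)),
        ∑ j ∈ S ⟨2*i.val, h⟩, xh j = (σ + X xh (ω i))/2 := by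
      intro i h
      rw [hSval ⟨2*i.val, h⟩]
      have hmod : ((⟨2*i.val, h⟩ : Fin (2^(s+12))).val % 2 = 0) := by
        show 2*i.val % 2 = 0
        omega
      rw [if_pos hmod]
      have hrow : (⟨(⟨2*i.val, h⟩ : Fin (2^(s+12))).val / 2,
          hdiv ⟨2*i.val, h⟩⟩ : Fin (2^(s+11))) = i := by
        apply Fin.ext
        show 2*i.val/2 = i.val
        omega
      rw [hrow]
      ring
    have hSodd : ∀ (i : Fin (2^(s+11))) (h : 2*i.val + 1 < 2^(s+12)),
        ∑ j ∈ S ⟨2*i.val + 1, h⟩, xh j = (σ - X xh (ω i))/2 := by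
      intro i h
      rw [hSval ⟨2*i.val + 1, h⟩]
      have hmod : ¬ ((⟨2*i.val + 1, h⟩ : Fin (2^(s+12))).val % 2 = 0) := by
        show ¬ ((2*i.val + 1) % 2 = 0)
        omega
      rw [if_neg hmod]
      have hrow : (⟨(⟨2*i.val + 1, h⟩ : Fin (2^(s+12))).val / 2,
          hdiv ⟨2*i.val + 1, h⟩⟩ : Fin (2^(s+11))) = i := by
        apply Fin.ext
        show (2*i.val + 1)/2 = i.val
        omega
      rw [hrow]
      ring
    -- membership helper
    have hmem : ∀ u : Fin (2^(s+12)), (1/128 : ℝ) ≤ |∑ j ∈ S u, xh j| →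
        u ∈ Finset.univ.filter (fun u : Fin (2^(s+12)) =>
          1/128 * Real.sqrt (∑ i, (p i - q i) ^ 2)
            ≤ |(∑ i ∈ S u, p i) - ∑ i ∈ S u, q i|) := by
      intro u hu
      rw [Finset.mem_filter]
      refine ⟨Finset.mem_univ _, ?_⟩
      have h2 : ∑ i ∈ S u, x i = rr * ∑ i ∈ S u, xh i := by
        rw [Finset.mul_sum]
        apply Finset.sum_congr rfl
        intro j _
        rw [hxh_def]
        field_simp
      rw [hsum_eq u, hsq_eq, h2, abs_mul, abs_of_nonneg hrrpos.le, ← hrr_def]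
      calc 1/128 * rr = rr * (1/128) := by ring
        _ ≤ rr * |∑ i ∈ S u, xh i| := mul_le_mul_of_nonneg_left hu hrrpos.le
    by_cases hσcase : |σ| ≤ 1/32
    · -- both halves of each good row work
      set f : Fin (2^(s+11)) × Bool → Fin (2^(s+12)) := fun ib =>
        ⟨2*ib.1.val + (if ib.2 then 1 else 0), by
          have := ib.1.isLt
          have h2 : (if ib.2 then 1 else 0) ≤ 1 := by split <;> norm_num
          omega⟩ with hf_def
      have hfmaps : ∀ ib ∈ G ×ˢ (Finset.univ : Finset Bool),
          f ib ∈ Finset.univ.filter (fun u : Fin (2^(s+12)) =>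
            1/128 * Real.sqrt (∑ i, (p i - q i) ^ 2)
              ≤ |(∑ i ∈ S u, p i) - ∑ i ∈ S u, q i|) := by
        rintro ⟨i, b⟩ hib
        rw [Finset.mem_product] at hib
        have hiG : 1/16 ≤ |X xh (ω i)| := by
          have := hib.1
          rw [hG_def, Finset.mem_filter] at this
          exact this.2
        apply hmem
        have habs_even : (1:ℝ)/128 ≤ |(σ + X xh (ω i))/2| := by
          have h1 : |X xh (ω i)| ≤ |σ + X xh (ω i)| + |σ| := by
            have h := abs_add_le (σ + X xh (ω i)) (-σ)
            have he : (σ + X xh (ω i)) + (-σ) = X xh (ω i) := by ring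
            rw [he, abs_neg] at h
            linarith
          have h2 : 1/32 ≤ |σ + X xh (ω i)| := by linarith
          rw [abs_div, show |(2:ℝ)| = 2 from by norm_num]
          linarith
        have habs_odd : (1:ℝ)/128 ≤ |(σ - X xh (ω i))/2| := by
          have h1 : |X xh (ω i)| ≤ |σ - X xh (ω i)| + |σ| := by
            have h := abs_add_le (σ - X xh (ω i)) (-σ)
            have he : (σ - X xh (ω i)) + (-σ) = -(X xh (ω i)) := by ring
            rw [he, abs_neg, abs_neg] at h
            linarith
          have h2 : 1/32 ≤ |σ - X xh (ω i)| := by linarith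
          rw [abs_div, show |(2:ℝ)| = 2 from by norm_num]
          linarith
        cases b
        · have hfe : f (i, false) = ⟨2*i.val, by have := i.isLt; omega⟩ := by
            apply Fin.ext
            show 2*i.val + 0 = 2*i.val
            omega
          rw [hfe, hSeven i _]
          exact habs_even
        · have hfe : f (i, true) = ⟨2*i.val + 1, by have := i.isLt; omega⟩ := by
            apply Fin.ext
            show 2*i.val + 1 = 2*i.val + 1
            rfl
          rw [hfe, hSodd i _]
          exact habs_odd
      have hfinj : Set.InjOn f ((G : Set (Fin (2^(s+11)) )) ×ˢ (Finset.univ : Finset Bool)) := by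
        rintro ⟨i, b⟩ _ ⟨i', b'⟩ _ hEq
        have h1 : (f (i,b)).val = (f (i',b')).val := by rw [hEq]
        have h2 : 2*i.val + (if b then 1 else 0) = 2*i'.val + (if b' then 1 else 0) := h1
        cases b <;> cases b'
        · norm_num at h2
          have hii : i = i' := Fin.ext (by omega)
          rw [hii]
        · exfalso
          norm_num at h2
          omega
        · exfalso
          norm_num at h2
          omega
        · norm_num at h2
          have hii : i = i' := Fin.ext (by omega)
          rw [hii]
      have hcard := Finset.card_le_card_of_injOn f hfmaps
        (by rw [Finset.coe_product]; exact hfinj)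
      have hcardprod : (G ×ˢ (Finset.univ : Finset Bool)).card = G.card * 2 := by
        rw [Finset.card_product]
        simp
      rw [hcardprod] at hcard
      rw [hcastpow]
      calc 1/256 * (2 * ((2^(s+11) : ℕ) : ℝ)) = 2 * (((2^(s+11) : ℕ) : ℝ)/256) := by ring
        _ ≤ 2 * (G.card : ℝ) := by linarith [hcount]
        _ = ((G.card * 2 : ℕ) : ℝ) := by push_cast; ring
        _ ≤ _ := by exact_mod_cast Nat.cast_le.mpr hcard
    · -- the mean σ is large : for every row one of the two halves works
      push_neg at hσcase
      set f : Fin (2^(s+11)) → Fin (2^(s+12)) := fun i =>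
        if 1/128 ≤ |(σ + X xh (ω i))/2|
        then ⟨2*i.val, by have := i.isLt; omega⟩
        else ⟨2*i.val + 1, by have := i.isLt; omega⟩ with hf_def
      have hfmaps : ∀ i ∈ (Finset.univ : Finset (Fin (2^(s+11)))),
          f i ∈ Finset.univ.filter (fun u : Fin (2^(s+12)) =>
            1/128 * Real.sqrt (∑ i, (p i - q i) ^ 2)
              ≤ |(∑ i ∈ S u, p i) - ∑ i ∈ S u, q i|) := by
        intro i _
        apply hmem
        simp only [hf_def]
        by_cases hcase : 1/128 ≤ |(σ + X xh (ω i))/2|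
        · rw [if_pos hcase, hSeven i _]
          exact hcase
        · rw [if_neg hcase, hSodd i _]
          push_neg at hcase
          have h1 : 2*|σ| ≤ |σ - X xh (ω i)| + |σ + X xh (ω i)| := by
            have h := abs_add_le (σ - X xh (ω i)) (σ + X xh (ω i))
            have he : (σ - X xh (ω i)) + (σ + X xh (ω i)) = 2*σ := by ring
            rw [he] at h
            have h2σ : |2*σ| = 2*|σ| := by
              rw [abs_mul, show |(2:ℝ)| = 2 from by norm_num]
            linarith [h, h2σ.symm.le, h2σ.le]
          have h3 : |σ + X xh (ω i)| < 1/64 := by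
            rw [abs_div, show |(2:ℝ)| = 2 from by norm_num] at hcase
            linarith
          rw [abs_div, show |(2:ℝ)| = 2 from by norm_num]
          have : 1/32 < |σ| := hσcase
          linarith
      have hfinj : Set.InjOn f ((Finset.univ : Finset (Fin (2^(s+11)))) : Set (Fin (2^(s+11)))) := by
        intro i _ i' _ hEq
        have h1 : (f i).val = (f i').val := by rw [hEq]
        simp only [hf_def] at h1
        apply Fin.ext
        by_cases c1 : 1/128 ≤ |(σ + X xh (ω i))/2| <;>
          by_cases c2 : 1/128 ≤ |(σ + X xh (ω i'))/2| <;>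
          simp only [c1, c2, if_true, if_false] at h1 <;>
          first
            | (exact h1 ▸ (by omega : 2*i.val = 2*i'.val → i.val = i'.val) h1)
            | omega
      have hcard := Finset.card_le_card_of_injOn f hfmaps hfinj
      rw [Finset.card_univ, Fintype.card_fin] at hcard
      rw [hcastpow]
      calc 1/256 * (2 * ((2^(s+11) : ℕ) : ℝ)) = ((2^(s+11) : ℕ) : ℝ)/128 := by ring
        _ ≤ ((2^(s+11) : ℕ) : ℝ) := by
            have : (0:ℝ) ≤ ((2^(s+11) : ℕ) : ℝ) := Nat.cast_nonneg _
            linarith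
        _ ≤ _ := by exact_mod_cast Nat.cast_le.mpr hcard
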